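/- arXiv:0909.0273 — 8 statements merged into one kernel-verified Lean document; each statement's English description precedes it below -/
import Mathlib

section
/- Let G be a nontrivial group and let P be a positive cone on G. Then there is no element g of G such that g P g⁻¹ = P⁻¹, where P⁻¹ = {x⁻¹ : x ∈ P}. -/
/-- A positive cone on a group `G`: a subset closed under multiplication such that
`G` is the disjoint union of `P`, `P⁻¹` and `{1}`. -/
def IsPositiveCone {G : Type*} [Group G] (P : Set G) : Prop :=
  (∀ a ∈ P, ∀ b ∈ P, a * b ∈ P) ∧ (1 : G) ∉ P ∧ ∀ g : G, g ≠ 1 → (g ∈ P ↔ g⁻¹ ∉ P)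

/-- The conjugate `g P g⁻¹` of a subset `P` of a group. -/
def conjCone {G : Type*} [Group G] (g : G) (P : Set G) : Set G :=
  (fun x => g * x * g⁻¹) '' P

/-- The space of left orderings of `G`: the set of all positive cones on `G`. -/
def LO (G : Type*) [Group G] : Type _ := {P : Set G // IsPositiveCone P}

/-- The topology of pointwise convergence on `LO G` (induced by the product of
discrete topologies on `G → Prop`), for which the sets `U_g = {P | g ∈ P}` form a
subbasis. -/
instance (G : Type*) [Group G] : TopologicalSpace (LO G) :=
  TopologicalSpace.induced (fun (P : LO G) (g : G) => g ∈ P.1)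
    (@Pi.topologicalSpace G (fun _ => Prop) (fun _ => ⊥))

/-- The orbit `{g P g⁻¹ : g ∈ G}` of a positive cone under the conjugation action. -/
def orb {G : Type*} [Group G] (P : LO G) : Set (LO G) :=
  {Q : LO G | ∃ g : G, Q.1 = conjCone g P.1}

theorem no_conjugate_is_reverse {G : Type*} [Group G] [Nontrivial G] (P : Set G)
    (hP : IsPositiveCone P) : ¬ ∃ g : G, conjCone g P = P⁻¹ := by
  obtain ⟨Hmul, H1, Hiff⟩ := hP
  rintro ⟨g, hg⟩
  have key : ∀ x ∈ P, g * x * g⁻¹ ∈ P⁻¹ := by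
    intro x hx; rw [← hg]; exact ⟨x, hx, rfl⟩
  by_cases hg1 : g = 1
  · subst hg1
    obtain ⟨a, ha⟩ := exists_ne (1 : G)
    by_cases haP : a ∈ P
    · have h2 := key a haP
      simp [Set.mem_inv] at h2
      exact ((Hiff a ha).mp haP) h2
    · have hainv : a⁻¹ ∈ P := by
        by_contra h2; exact haP ((Hiff a ha).mpr h2)
      have h2 := key a⁻¹ hainv
      simp [Set.mem_inv] at h2
      exact H1 (by simpa using Hmul a h2 a⁻¹ hainv)
  · by_cases hgP : g ∈ P
    · have h2 := key g hgP
      simp [Set.mem_inv] at h2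
      exact H1 (by simpa using Hmul g hgP g⁻¹ h2)
    · have hginv : g⁻¹ ∈ P := by
        by_contra h2; exact hgP ((Hiff g hg1).mpr h2)
      have h2 := key g⁻¹ hginv
      simp [Set.mem_inv] at h2
      exact H1 (by simpa using Hmul g h2 g⁻¹ hginv)
end

section
/- Let G be a nontrivial group and let P be a positive cone on G whose conjugation orbit Orb_G(P) = {gPg⁻¹ : g ∈ G} is dense in LO(G). Then LO(G) contains no isolated points. -/
section aux
variable {G : Type*} [Group G]

lemma mem_conjCone {g x : G} {P : Set G} :
    x ∈ conjCone g P ↔ g⁻¹ * x * g ∈ P := by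
  constructor
  · rintro ⟨a, ha, rfl⟩
    rw [show g⁻¹ * (g * a * g⁻¹) * g = a from by group]
    exact ha
  · intro h; exact ⟨g⁻¹ * x * g, h, by group⟩

lemma conjCone_cancel (g : G) (S : Set G) : conjCone g⁻¹ (conjCone g S) = S := by
  ext x
  rw [mem_conjCone, mem_conjCone, inv_inv,
    show g⁻¹ * (g * x * g⁻¹) * g = x from by group]

lemma IsPositiveCone.conj {P : Set G} (hP : IsPositiveCone P) (g : G) :
    IsPositiveCone (conjCone g P) := by
  obtain ⟨hmul, hone, htri⟩ := hP
  refine ⟨?_, ?_, ?_⟩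
  · intro a ha b hb
    rw [mem_conjCone] at ha hb ⊢
    rw [show g⁻¹ * (a * b) * g = (g⁻¹ * a * g) * (g⁻¹ * b * g) from by group]
    exact hmul _ ha _ hb
  · rw [mem_conjCone, show g⁻¹ * 1 * g = 1 from by group]
    exact hone
  · intro x hx
    rw [mem_conjCone, mem_conjCone,
      show g⁻¹ * x⁻¹ * g = (g⁻¹ * x * g)⁻¹ from by group]
    refine htri _ fun h => hx ?_
    rw [show x = g * (g⁻¹ * x * g) * g⁻¹ from by group, h]
    group

lemma IsPositiveCone.inv {P : Set G} (hP : IsPositiveCone P) :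
    IsPositiveCone P⁻¹ := by
  obtain ⟨hmul, hone, htri⟩ := hP
  refine ⟨?_, ?_, ?_⟩
  · intro a ha b hb
    simp only [Set.mem_inv] at ha hb ⊢
    rw [mul_inv_rev]
    exact hmul _ hb _ ha
  · simp only [Set.mem_inv, inv_one]
    exact hone
  · intro x hx
    simp only [Set.mem_inv, inv_inv]
    have := htri x⁻¹ (inv_ne_one.mpr hx)
    rw [inv_inv] at this
    exact this

def Phi (g : G) : LO G → LO G := fun R => ⟨conjCone g R.1⁻¹, R.2.inv.conj g⟩

lemma continuous_Phi (g : G) : Continuous (Phi (G := G) g) := by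
  letI : TopologicalSpace (G → Prop) := @Pi.topologicalSpace G (fun _ => Prop) (fun _ => ⊥)
  letI : TopologicalSpace Prop := ⊥
  apply continuous_induced_rng.2
  have h1 : Continuous (fun (R : LO G) => fun x : G => x ∈ R.1) := continuous_induced_dom
  have h2 : Continuous (fun (p : G → Prop) => fun x : G => p ((g⁻¹ * x * g)⁻¹)) :=
    continuous_pi fun x => continuous_apply _
  have h3 := h2.comp h1
  convert h3 using 1
  funext R x
  show (x ∈ (Phi g R).1) = ((g⁻¹ * x * g)⁻¹ ∈ R.1)
  exact propext (by rw [show (Phi g R).1 = conjCone g R.1⁻¹ from rfl, mem_conjCone, Set.mem_inv])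

end aux

theorem no_isolated_points_of_dense_orbit {G : Type*} [Group G] [Nontrivial G]
    (P : LO G) (hdense : closure (orb P) = Set.univ) :
    ∀ Q : LO G, ¬ IsOpen ({Q} : Set (LO G)) := by
  intro Q hQ
  have hone : (1 : G) ∉ P.1 := P.2.2.1
  have htri := P.2.2.2
  have hmul := P.2.1
  -- Step 1: Q is in the orbit of P
  have hclQ : Q ∈ closure (orb P) := by rw [hdense]; trivial
  obtain ⟨R, hR1, g, hg⟩ := mem_closure_iff.mp hclQ {Q} hQ rfl
  rw [Set.mem_singleton_iff] at hR1
  subst hR1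
  -- Step 2: {P⁻¹} is open
  set Pinv : LO G := ⟨P.1⁻¹, P.2.inv⟩ with hPinv
  have hpre : Phi g ⁻¹' {R} = {Pinv} := by
    ext S
    simp only [Set.mem_preimage, Set.mem_singleton_iff]
    constructor
    · intro h
      have h' : conjCone g S.1⁻¹ = conjCone g P.1 := by
        have := congrArg Subtype.val h
        rw [show (Phi g S).1 = conjCone g S.1⁻¹ from rfl] at this
        rw [this, hg]
      have h'' : S.1⁻¹ = P.1 := by
        have := congrArg (conjCone g⁻¹) h'
        rwa [conjCone_cancel, conjCone_cancel] at this
      apply Subtype.ext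
      rw [show Pinv.1 = P.1⁻¹ from rfl, ← h'', inv_inv]
    · rintro rfl
      apply Subtype.ext
      rw [show (Phi g Pinv).1 = conjCone g P.1⁻¹⁻¹ from rfl, inv_inv, ← hg]
  have hopen : IsOpen ({Pinv} : Set (LO G)) := by
    rw [← hpre]
    exact (continuous_Phi g).isOpen_preimage _ hQ
  -- Step 3: density gives P⁻¹ = h P h⁻¹
  have hclPinv : Pinv ∈ closure (orb P) := by rw [hdense]; trivial
  obtain ⟨S, hS1, h, hS2⟩ := mem_closure_iff.mp hclPinv {Pinv} hopen rfl
  rw [Set.mem_singleton_iff] at hS1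
  subst hS1
  have key : P.1⁻¹ = conjCone h P.1 := hS2
  -- Step 4: derive an element a with a ∈ P and a⁻¹ ∈ P
  have : ∃ a : G, a ∈ P.1 ∧ a⁻¹ ∈ P.1 := by
    by_cases hh : h = 1
    · subst hh
      have hPP : P.1⁻¹ = P.1 := by
        rw [key]; ext x; rw [mem_conjCone]; simp
      obtain ⟨g0, hg0⟩ := exists_ne (1 : G)
      have t := htri g0 hg0
      by_cases hgP : g0 ∈ P.1
      · refine ⟨g0, hgP, ?_⟩
        rw [← hPP, Set.mem_inv, inv_inv]
        exact hgP
      · have : g0⁻¹ ∈ P.1 := by_contra fun hc => hgP (t.mpr hc)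
        refine ⟨g0⁻¹, this, ?_⟩
        rw [← hPP] at this
        rwa [Set.mem_inv] at this
    · have t := htri h hh
      by_cases hhP : h ∈ P.1
      · refine ⟨h, hhP, ?_⟩
        have : h ∈ conjCone h P.1 := by
          rw [mem_conjCone, show h⁻¹ * h * h = h from by group]
          exact hhP
        rw [← key, Set.mem_inv] at this
        exact this
      · have hinv : h⁻¹ ∈ P.1 := by_contra fun hc => hhP (t.mpr hc)
        refine ⟨h⁻¹, hinv, ?_⟩
        have : h⁻¹ ∈ conjCone h P.1 := by
          rw [mem_conjCone, show h⁻¹ * h⁻¹ * h = h⁻¹ from by group]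
          exact hinv
        rw [← key, Set.mem_inv, inv_inv] at this
        rw [inv_inv]
        exact this
  obtain ⟨a, ha, ha'⟩ := this
  exact hone (by simpa using hmul a ha a⁻¹ ha')
end

section
/- Let G be a group, P a positive cone on G, and suppose g ∈ G is cofinal in the left ordering <_P, i.e. for every h ∈ G there exists an integer n with g^{-n} <_P h <_P g^{n}. Then the reverse positive cone P⁻¹ does not lie in the closure of Orb_G(P) in LO(G). -/
/-- The left ordering determined by a positive cone: `a <_P b` iff `a⁻¹ * b ∈ P`. -/
def ltC {G : Type*} [Group G] (P : Set G) (a b : G) : Prop := a⁻¹ * b ∈ P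

/-- An element `g` is cofinal in `<_P` if every `h` satisfies `g^(-n) <_P h <_P g^n`
for some integer `n`. -/
def IsCofinalFor' {G : Type*} [Group G] (P : Set G) (g : G) : Prop :=
  ∀ h : G, ∃ n : ℤ, ltC P (g ^ (-n)) h ∧ ltC P h (g ^ n)

lemma myPow {G : Type*} [Group G] {P : Set G} (hP : IsPositiveCone P) {g : G}
    (hg : g ∈ P) : ∀ m : ℕ, g ^ (m + 1) ∈ P := by
  intro m
  induction m with
  | zero => simpa using hg
  | succ k ih => rw [pow_succ]; exact hP.1 _ ih _ hg

lemma myZpow {G : Type*} [Group G] {P : Set G} (hP : IsPositiveCone P) {g : G}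
    (hg : g ∈ P) {n : ℤ} (hn : 0 < n) : g ^ n ∈ P := by
  obtain ⟨m, rfl⟩ : ∃ m : ℕ, n = ((m : ℤ) + 1) := ⟨(n - 1).toNat, by omega⟩
  rw [show ((m : ℤ) + 1) = ((m + 1 : ℕ) : ℤ) by push_cast; ring, zpow_natCast]
  exact myPow hP hg m

lemma myConj {G : Type*} [Group G] {P : Set G} (hP : IsPositiveCone P) {g : G}
    (hg : g ∈ P) (hcof : IsCofinalFor' P g) (h : G) : h⁻¹ * g * h ∈ P := by
  by_contra hc
  have hg1 : g ≠ 1 := fun e => hP.2.1 (e ▸ hg)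
  have hne : (h⁻¹ * g * h)⁻¹ ≠ 1 := by
    intro e
    apply hg1
    have : h⁻¹ * g * h = 1 := by rwa [inv_eq_one] at e
    calc g = h * (h⁻¹ * g * h) * h⁻¹ := by group
    _ = 1 := by rw [this]; group
  have hinv : (h⁻¹ * g * h)⁻¹ ∈ P := (hP.2.2 _ hne).mpr (by simpa using hc)
  obtain ⟨n, h1, h2⟩ := hcof h
  have hc' : g ^ n * h ∈ P := by
    have := h1; unfold ltC at this
    rwa [zpow_neg, inv_inv] at this
  have hb : h⁻¹ * g ^ n ∈ P := h2
  have hnpos : 0 < n := by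
    by_contra hn
    push_neg at hn
    have h2n : g ^ (2 * n) ∈ P := by
      have := hP.1 _ hc' _ hb
      have e : g ^ n * h * (h⁻¹ * g ^ n) = g ^ (2 * n) := by group
      rwa [e] at this
    rcases lt_or_eq_of_le hn with hn' | hn'
    · have : g ^ (-(2 * n)) ∈ P := myZpow hP hg (by omega)
      have h1' : (1 : G) ∈ P := by
        have := hP.1 _ h2n _ this
        rwa [show g ^ (2 * n) * g ^ (-(2 * n)) = 1 by group] at this
      exact hP.2.1 h1'
    · subst hn'
      simp at h2n
      exact hP.2.1 h2n
  have ha : ((h⁻¹ * g * h)⁻¹) ^ (2 * n) ∈ P := myZpow hP hinv (by omega)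
  have h1' : (1 : G) ∈ P := by
    have := hP.1 _ (hP.1 _ ha _ hb) _ hc'
    have e1 : ((h⁻¹ * g * h)⁻¹) ^ (2 * n) = h⁻¹ * (g⁻¹) ^ (2 * n) * (h⁻¹)⁻¹ := by
      rw [show (h⁻¹ * g * h)⁻¹ = h⁻¹ * g⁻¹ * (h⁻¹)⁻¹ by group, conj_zpow]
    rw [e1] at this
    rwa [show h⁻¹ * (g⁻¹) ^ (2 * n) * (h⁻¹)⁻¹ * (h⁻¹ * g ^ n) * (g ^ n * h) = 1 by group] at this
  exact hP.2.1 h1'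

lemma myInvCof {G : Type*} [Group G] {P : Set G} {g : G}
    (hcof : IsCofinalFor' P g) : IsCofinalFor' P g⁻¹ := by
  intro h
  obtain ⟨n, h1, h2⟩ := hcof h
  refine ⟨-n, ?_, ?_⟩
  · rwa [neg_neg, inv_zpow, ← zpow_neg]
  · rwa [inv_zpow, ← zpow_neg, neg_neg]

theorem reverse_not_in_orbit_closure_of_cofinal {G : Type*} [Group G]
    (P : LO G) (g : G) (hcof : IsCofinalFor' P.1 g) :
    ∀ Q : LO G, Q.1 = (P.1)⁻¹ → Q ∉ closure (orb P) := by
  intro Q hQ hclos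
  have hP := P.2
  -- g ≠ 1
  have hg1 : g ≠ 1 := by
    intro e
    obtain ⟨n, _, h2⟩ := hcof 1
    have : (1 : G) ∈ P.1 := by
      have := h2; unfold ltC at this
      simpa [e] using this
    exact hP.2.1 this
  -- choose g' ∈ P.1 cofinal
  obtain ⟨g', hg'P, hg'cof, hg'1⟩ :
      ∃ g' : G, g' ∈ P.1 ∧ IsCofinalFor' P.1 g' ∧ g' ≠ 1 := by
    by_cases hgP : g ∈ P.1
    · exact ⟨g, hgP, hcof, hg1⟩
    · have : g⁻¹ ∈ P.1 := by
        have hne : g⁻¹ ≠ 1 := by simpa [inv_eq_one] using hg1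
        exact (hP.2.2 g⁻¹ hne).mpr (by simpa using hgP)
      exact ⟨g⁻¹, this, myInvCof hcof, by simpa [inv_eq_one] using hg1⟩
  -- the open set U = {R | g' ∉ R.1}
  set U : Set (LO G) := {R : LO G | g' ∉ R.1} with hU
  have hUopen : IsOpen U := by
    have : U = (fun (R : LO G) (x : G) => x ∈ R.1) ⁻¹'
        ((fun f : G → Prop => f g') ⁻¹' {p : Prop | ¬ p}) := rfl
    rw [this]
    refine @isOpen_induced (LO G) (G → Prop)
      (@Pi.topologicalSpace G (fun _ => Prop) (fun _ => ⊥)) _ _ ?_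
    exact @Continuous.isOpen_preimage (G → Prop) Prop
      (@Pi.topologicalSpace G (fun _ => Prop) (fun _ => ⊥)) ⊥ (fun f => f g')
      (@continuous_apply G (fun _ => Prop) (fun _ => ⊥) g') _
      (@isOpen_discrete Prop ⊥ (discreteTopology_bot Prop) _)
  have hQU : Q ∈ U := by
    intro hmem
    rw [hQ] at hmem
    have : g'⁻¹ ∈ P.1 := hmem
    exact (hP.2.2 g' hg'1).mp hg'P this
  obtain ⟨R, hRU, h, hR⟩ := mem_closure_iff.mp hclos U hUopen hQU
  apply hRU
  rw [hR]
  exact ⟨h⁻¹ * g' * h, myConj hP hg'P hg'cof h, by group⟩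
end

section
/- Let G be a group with positive cone P, and suppose g ∈ P is cofinal in the left ordering <_P. Then h <_P gh for every h ∈ G; equivalently, h⁻¹gh ∈ P for every h ∈ G, i.e. g belongs to every conjugate hPh⁻¹ of P. -/
/-- An element `g` is cofinal in `<_P` if every `h` satisfies `g^(-n) <_P h <_P g^n`
for some integer `n`. -/
def IsCofinalForCone {G : Type*} [Group G] (P : Set G) (g : G) : Prop :=
  ∀ h : G, ∃ n : ℤ, ltC P (g ^ (-n)) h ∧ ltC P h (g ^ n)

theorem cofinal_positive_in_every_conjugate {G : Type*} [Group G]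
    (P : Set G) (hP : IsPositiveCone P) (g : G) (hgP : g ∈ P)
    (hcof : IsCofinalForCone P g) :
    ∀ h : G, ltC P h (g * h) ∧ g ∈ conjCone h P := by
  obtain ⟨hmul, h1, hinv⟩ := hP
  have hg1 : g ≠ 1 := fun e => h1 (e ▸ hgP)
  have hpow : ∀ x ∈ P, ∀ n : ℕ, x ^ (n + 1) ∈ P := by
    intro x hx n
    induction n with
    | zero => simpa using hx
    | succ k ih => rw [pow_succ]; exact hmul _ ih _ hx
  have hzpow : ∀ k : ℤ, 0 < k → g ^ k ∈ P := by
    intro k hk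
    lift k to ℕ using hk.le with n
    have hn : n ≠ 0 := by exact_mod_cast hk.ne'
    obtain ⟨m, rfl⟩ := Nat.exists_eq_succ_of_ne_zero hn
    rw [zpow_natCast]
    exact hpow g hgP m
  have key : ∀ h : G, h⁻¹ * g * h ∈ P := by
    intro h
    by_contra hc
    have hne : (h⁻¹ * g * h)⁻¹ ≠ 1 := by
      simp only [ne_eq, inv_eq_one]
      intro e
      apply hg1
      have : h * (h⁻¹ * g * h) * h⁻¹ = h * 1 * h⁻¹ := by rw [e]
      group at this; simpa using this
    have hx : h⁻¹ * g⁻¹ * h ∈ P := by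
      have := (hinv _ hne).mpr (by simpa using hc)
      simpa [mul_inv_rev, mul_assoc] using this
    obtain ⟨m, hl, hr⟩ := hcof h
    unfold ltC at hl hr
    rw [zpow_neg, inv_inv] at hl
    -- hl : g ^ m * h ∈ P, hr : h⁻¹ * g ^ m ∈ P
    set M : ℤ := m.natAbs + 1 with hM
    have hMm : 0 < M - m := by
      have := Int.le_natAbs (a := m); omega
    have hgMm : g ^ (M - m) ∈ P := hzpow _ hMm
    have hL : g ^ M * h ∈ P := by
      have := hmul _ hgMm _ hl
      rwa [← mul_assoc, ← zpow_add, sub_add_cancel] at this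
    have hR : h⁻¹ * g ^ M ∈ P := by
      have := hmul _ hr _ hgMm
      rwa [mul_assoc, ← zpow_add, add_sub_cancel] at this
      -- goal now: h⁻¹ * g ^ (m + (M - m)) ∈ P ?  need rewrite
    -- powers of the conjugate
    have hxn : (h⁻¹ * g⁻¹ * h) ^ (2 * m.natAbs + 2 + 1) ∈ P := hpow _ hx _
    have hconj : (h⁻¹ * g⁻¹ * h) ^ (2 * m.natAbs + 2 + 1)
        = h⁻¹ * (g⁻¹) ^ (2 * m.natAbs + 2 + 1) * h := by
      rw [show h⁻¹ * g⁻¹ * h = h⁻¹ * g⁻¹ * (h⁻¹)⁻¹ by rw [inv_inv]]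
      rw [conj_pow, inv_inv]
    rw [hconj] at hxn
    have hfinal : g ^ M * h * (h⁻¹ * (g⁻¹) ^ (2 * m.natAbs + 2 + 1) * h) * (h⁻¹ * g ^ M) ∈ P :=
      hmul _ (hmul _ hL _ hxn) _ hR
    have heq : g ^ M * h * (h⁻¹ * (g⁻¹) ^ (2 * m.natAbs + 2 + 1) * h) * (h⁻¹ * g ^ M) = g⁻¹ := by
      have hN : ((2 * m.natAbs + 2 + 1 : ℕ) : ℤ) = 2 * M + 1 := by push_cast [hM]; omega
      rw [← zpow_natCast (g⁻¹), hN]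
      group
    rw [heq] at hfinal
    exact (hinv g hg1).mp hgP hfinal
  intro h
  refine ⟨?_, ⟨h⁻¹ * g * h, key h, by group⟩⟩
  unfold ltC
  have := key h
  rwa [mul_assoc] at this
end

section
/- Let G be a group and P a positive cone on G such that there exists an element g ∈ G, g ≠ 1, that is cofinal in the left ordering <_P. Then the orbit Orb_G(P) is not dense in LO(G). In particular, if every left ordering of G admits a nontrivial cofinal element, then LO(G) contains no dense orbit. -/
/-- An element `g` is cofinal in `<_P` if every `h` satisfies `g^(-n) <_P h <_P g^n`
for some integer `n`. -/
def IsCofinalElementFor {G : Type*} [Group G] (P : Set G) (g : G) : Prop :=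
  ∀ h : G, ∃ n : ℤ, ltC P (g ^ (-n)) h ∧ ltC P h (g ^ n)

/-- positive natural powers of elements of a positive cone are in the cone -/
lemma pos_pow_mem {G : Type*} [Group G] {P : Set G} (hP : IsPositiveCone P)
    {p : G} (hp : p ∈ P) : ∀ k : ℕ, p ^ (k + 1) ∈ P := by
  intro k
  induction k with
  | zero => simpa using hp
  | succ n ih =>
      rw [pow_succ]
      exact hP.1 _ ih _ hp

/-- positive integer powers of elements of a positive cone are in the cone -/
lemma pos_zpow_mem {G : Type*} [Group G] {P : Set G} (hP : IsPositiveCone P)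
    {p : G} (hp : p ∈ P) {k : ℤ} (hk : 1 ≤ k) : p ^ k ∈ P := by
  obtain ⟨m, rfl⟩ : ∃ m : ℕ, k = (m : ℤ) + 1 := by
    refine ⟨(k - 1).toNat, ?_⟩
    omega
  have : p ^ ((m : ℤ) + 1) = p ^ (m + 1) := by
    rw [← zpow_natCast]
    push_cast
    ring_nf
  rw [this]
  exact pos_pow_mem hP hp m

/-- If `g ∈ P` is cofinal, then all conjugates of `g` lie in `P`. -/
lemma conj_mem_of_cofinal {G : Type*} [Group G] {P : Set G} (hP : IsPositiveCone P)
    {g : G} (hgP : g ∈ P) (hcof : IsCofinalElementFor P g) (x : G) : x * g * x⁻¹ ∈ P := by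
  by_contra hmem
  have hg1 : g ≠ 1 := fun h => hP.2.1 (h ▸ hgP)
  have hx1 : x * g * x⁻¹ ≠ 1 := by
    intro h
    apply hg1
    have := congrArg (fun y => x⁻¹ * y * x) h
    simpa [mul_assoc] using this
  have hs : x * g⁻¹ * x⁻¹ ∈ P := by
    have := (hP.2.2 _ hx1).not.mp (by simpa using hmem)
    simpa [mul_assoc] using not_not.mp this
  obtain ⟨n, h1, h2⟩ := hcof x⁻¹
  -- h1 : (g ^ (-n))⁻¹ * x⁻¹ ∈ P, i.e. g^n * x⁻¹ ∈ P
  -- h2 : (x⁻¹)⁻¹ * g ^ n ∈ P, i.e. x * g^n ∈ P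
  have h1' : g ^ n * x⁻¹ ∈ P := by simpa [ltC] using h1
  have h2' : x * g ^ n ∈ P := by simpa [ltC] using h2
  set k : ℤ := max (2 * n + 1) 1 with hk
  have hk1 : 1 ≤ k := le_max_right _ _
  have hk2 : 2 * n - k ≤ -1 := by
    rcases le_total (2 * n + 1) 1 with h | h
    · omega
    · omega
  have hsk : (x * g⁻¹ * x⁻¹) ^ k ∈ P := pos_zpow_mem hP hs hk1
  have hskeq : (x * g⁻¹ * x⁻¹) ^ k = x * g ^ (-k) * x⁻¹ := by
    have := map_zpow (MulAut.conj x) g⁻¹ k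
    simp only [MulAut.conj_apply] at this
    rw [← this, inv_zpow, ← zpow_neg]
  have hbig : g ^ (2 * n - k) ∈ P := by
    have hprod := hP.1 _ (hP.1 _ h1' _ (hskeq ▸ hsk)) _ h2'
    have : g ^ n * x⁻¹ * (x * g ^ (-k) * x⁻¹) * (x * g ^ n) = g ^ (2 * n - k) := by
      rw [show (2 : ℤ) * n - k = n + -k + n by ring, zpow_add, zpow_add]
      group
    rwa [this] at hprod
  have hneg : g ^ (k - 2 * n) ∈ P := pos_zpow_mem hP hgP (by omega)
  have : (1 : G) ∈ P := by
    have := hP.1 _ hbig _ hneg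
    rwa [← zpow_add, show 2 * n - k + (k - 2 * n) = 0 by ring, zpow_zero] at this
  exact hP.2.1 this

/-- The reversed cone is a positive cone. -/
lemma rev_isPositiveCone {G : Type*} [Group G] {P : Set G} (hP : IsPositiveCone P) :
    IsPositiveCone {a : G | a⁻¹ ∈ P} := by
  refine ⟨?_, ?_, ?_⟩
  · intro a ha b hb
    have : (a * b)⁻¹ = b⁻¹ * a⁻¹ := by group
    simp only [Set.mem_setOf_eq, this]
    exact hP.1 _ hb _ ha
  · simpa using hP.2.1
  · intro a ha
    simp only [Set.mem_setOf_eq, inv_inv]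
    have := hP.2.2 a⁻¹ (by simpa using ha)
    simp only [inv_inv] at this
    tauto

theorem orbit_not_dense_of_cofinal {G : Type*} [Group G]
    (P : LO G) (g : G) (hg : g ≠ 1) (hcof : IsCofinalElementFor P.1 g) :
    closure (orb P) ≠ Set.univ := by
  -- WLOG find g' ∈ P.1 which is cofinal
  obtain ⟨g', hg'P, hcof'⟩ : ∃ g' : G, g' ∈ P.1 ∧ IsCofinalElementFor P.1 g' := by
    by_cases h : g ∈ P.1
    · exact ⟨g, h, hcof⟩
    · refine ⟨g⁻¹, ?_, ?_⟩
      · have := (P.2.2.2 g hg).not.mp h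
        exact not_not.mp this
      · intro h'
        obtain ⟨n, h1, h2⟩ := hcof h'
        exact ⟨-n, by simpa [zpow_neg, inv_zpow] using h1,
               by simpa [zpow_neg, inv_zpow] using h2⟩
  -- the reversed order
  set Q : LO G := ⟨{a : G | a⁻¹ ∈ P.1}, rev_isPositiveCone P.2⟩ with hQ
  intro hdense
  -- Q is in the closure of the orbit
  have hQcl : Q ∈ closure (orb P) := by rw [hdense]; trivial
  -- the open set U = {R | g' ∉ R.1}
  set U : Set (LO G) := {R : LO G | g' ∉ R.1} with hU
  have hUopen : IsOpen U := by
    refine (@isOpen_induced_iff (LO G) (G → Prop)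
        (@Pi.topologicalSpace G (fun _ => Prop) (fun _ => ⊥)) U
        (fun (R : LO G) (a : G) => a ∈ R.1)).mpr
      ⟨(fun f : G → Prop => f g') ⁻¹' {q : Prop | ¬ q}, ?_, rfl⟩
    have hcont : @Continuous (G → Prop) Prop
        (@Pi.topologicalSpace G (fun _ => Prop) (fun _ => ⊥)) ⊥ (fun f => f g') :=
      @continuous_apply G (fun _ => Prop) (fun _ => ⊥) g'
    exact @Continuous.isOpen_preimage (G → Prop) Prop
      (@Pi.topologicalSpace G (fun _ => Prop) (fun _ => ⊥)) ⊥ _ hcont _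
      trivial
  have hQU : Q ∈ U := by
    intro hmem
    simp only [hQ, Set.mem_setOf_eq] at hmem
    have h1 : g' * g'⁻¹ ∈ P.1 := P.2.1 _ hg'P _ hmem
    exact P.2.2.1 (by simpa using h1)
  obtain ⟨R, hRU, x, hRx⟩ := mem_closure_iff.mp hQcl U hUopen hQU
  apply hRU
  rw [hRx]
  exact ⟨x⁻¹ * g' * x, by simpa using conj_mem_of_cofinal P.2 hg'P hcof' x⁻¹, by group⟩
end

section
/- Let G be a nontrivial finitely generated left orderable group all of whose left orderings are Conradian (i.e. for every positive cone P on G, the order <_P is Conradian). Then LO(G) does not contain a dense orbit: for every positive cone P, the closure of Orb_G(P) is a proper subset of LO(G). -/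
/-- A left ordering is Conradian if for all positive g, h there is a positive
integer n with g <_P h * g ^ n. -/
def IsConradian {G : Type*} [Group G] (P : Set G) : Prop :=
  ∀ g ∈ P, ∀ h ∈ P, ∃ n : ℕ, 0 < n ∧ ltC P g (h * g ^ n)

section Aux

variable {G : Type*} [Group G]

lemma cone_mul {P : Set G} (hP : IsPositiveCone P) {a b : G} (ha : a ∈ P) (hb : b ∈ P) :
    a * b ∈ P := hP.1 a ha b hb

lemma cone_one {P : Set G} (hP : IsPositiveCone P) : (1 : G) ∉ P := hP.2.1

lemma cone_pow {P : Set G} (hP : IsPositiveCone P) {a : G} (ha : a ∈ P) :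
    ∀ n : ℕ, 0 < n → a ^ n ∈ P := by
  intro n hn
  induction n with
  | zero => omega
  | succ k ih =>
    rcases Nat.eq_zero_or_pos k with hk | hk
    · simpa [hk] using ha
    · rw [pow_succ]; exact cone_mul hP (ih hk) ha

lemma cone_ne_one {P : Set G} (hP : IsPositiveCone P) {a : G} (ha : a ∈ P) : a ≠ 1 := by
  rintro rfl; exact hP.2.1 ha

lemma cone_inv_mem {P : Set G} (hP : IsPositiveCone P) {a : G} (h1 : a ≠ 1) (h : a ∉ P) :
    a⁻¹ ∈ P := by
  by_contra h'
  exact h ((hP.2.2 a h1).mpr h')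

lemma cone_not_inv_mem {P : Set G} (hP : IsPositiveCone P) {a : G} (ha : a ∈ P) : a⁻¹ ∉ P := by
  exact (hP.2.2 a (cone_ne_one hP ha)).mp ha

/-- The reversed cone. -/
lemma inv_cone {P : Set G} (hP : IsPositiveCone P) : IsPositiveCone {x : G | x⁻¹ ∈ P} := by
  refine ⟨?_, ?_, ?_⟩
  · intro a ha b hb
    show (a * b)⁻¹ ∈ P
    rw [mul_inv_rev]
    exact cone_mul hP hb ha
  · show (1 : G)⁻¹ ∉ P
    simpa using cone_one hP
  · intro g hg
    show g⁻¹ ∈ P ↔ g⁻¹⁻¹ ∉ P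
    have := hP.2.2 g⁻¹ (by simpa using hg)
    simpa using this

/-- Conradian property of `P`, consequence: conjugation control from the left. -/
lemma claimC1 {P : Set G} (hP : IsPositiveCone P) (hc : IsConradian P)
    {g u : G} (hg : g ∈ P) (hu : u ∈ P) : ∃ m : ℕ, g⁻¹ * u * g ^ m ∈ P := by
  obtain ⟨n, _, hn⟩ := hc g hg u hu
  exact ⟨n, by rw [ltC] at hn; rw [mul_assoc]; exact hn⟩

/-- Conradian property of the reversed cone, consequence. -/
lemma claimD1 {P : Set G} (hP : IsPositiveCone P) (hc : IsConradian {x : G | x⁻¹ ∈ P})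
    {g u : G} (hg : g ∈ P) (hu : u ∈ P) : ∃ m : ℕ, g ^ m * u * g⁻¹ ∈ P := by
  have hgi : g⁻¹ ∈ {x : G | x⁻¹ ∈ P} := by simpa using hg
  have hui : u⁻¹ ∈ {x : G | x⁻¹ ∈ P} := by simpa using hu
  obtain ⟨n, _, hn⟩ := hc g⁻¹ hgi u⁻¹ hui
  rw [ltC] at hn
  refine ⟨n, ?_⟩
  have : (g⁻¹⁻¹ * (u⁻¹ * g⁻¹ ^ n))⁻¹ ∈ P := hn
  convert this using 1
  group

lemma claimCj {P : Set G} (hP : IsPositiveCone P) (hc : IsConradian P)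
    {g : G} (hg : g ∈ P) (j : ℕ) :
    ∀ u ∈ P, ∃ m : ℕ, (g ^ j)⁻¹ * u * g ^ m ∈ P := by
  induction j with
  | zero => intro u hu; exact ⟨0, by simpa using hu⟩
  | succ k ih =>
    intro u hu
    obtain ⟨m, hm⟩ := ih u hu
    obtain ⟨l, hl⟩ := claimC1 hP hc hg hm
    refine ⟨m + l, ?_⟩
    convert hl using 1
    rw [pow_succ, pow_add]
    group

lemma claimDj {P : Set G} (hP : IsPositiveCone P) (hc : IsConradian {x : G | x⁻¹ ∈ P})
    {g : G} (hg : g ∈ P) (j : ℕ) :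
    ∀ u ∈ P, ∃ m : ℕ, g ^ m * u * (g ^ j)⁻¹ ∈ P := by
  induction j with
  | zero => intro u hu; exact ⟨0, by simpa using hu⟩
  | succ k ih =>
    intro u hu
    obtain ⟨m, hm⟩ := ih u hu
    obtain ⟨l, hl⟩ := claimD1 hP hc hg hm
    refine ⟨l + m, ?_⟩
    convert hl using 1
    rw [pow_succ, pow_add]
    group

/-- Two-sided boundedness by powers of `g`. -/
def Bound (P : Set G) (g h : G) : Prop :=
  (∃ n : ℕ, g ^ n * h ∈ P) ∧ (∃ n : ℕ, h⁻¹ * g ^ n ∈ P)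

section Bd

variable {P : Set G} (hP : IsPositiveCone P) (hc : IsConradian P)
  (hc' : IsConradian {x : G | x⁻¹ ∈ P}) {g : G} (hg : g ∈ P)

include hP hc hc' hg

lemma bound_one : Bound P g 1 :=
  ⟨⟨1, by simpa using hg⟩, ⟨1, by simpa using hg⟩⟩

lemma bound_mul {h k : G} (bh : Bound P g h) (bk : Bound P g k) : Bound P g (h * k) := by
  obtain ⟨⟨a, ha⟩, ⟨a', ha'⟩⟩ := bh
  obtain ⟨⟨b, hb⟩, ⟨b', hb'⟩⟩ := bk
  constructor
  · -- lower bound: g^m * (h*k) ∈ P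
    obtain ⟨M, hM⟩ := claimDj hP hc' hg b (g ^ a * h) ha
    refine ⟨M + a, ?_⟩
    have := cone_mul hP hM hb
    convert this using 1
    rw [pow_add]; group
  · -- upper bound: (h*k)⁻¹ * g^m ∈ P
    obtain ⟨M, hM⟩ := claimCj hP hc hg b' (h⁻¹ * g ^ a') ha'
    refine ⟨a' + M, ?_⟩
    have := cone_mul hP hb' hM
    convert this using 1
    rw [pow_add]; group

lemma bound_inv {h : G} (bh : Bound P g h) : Bound P g h⁻¹ := by
  obtain ⟨⟨a, ha⟩, ⟨a', ha'⟩⟩ := bh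
  constructor
  · -- g^m * h⁻¹ ∈ P
    obtain ⟨M, hM⟩ := claimDj hP hc' hg a' (h⁻¹ * g ^ a') ha'
    refine ⟨M, ?_⟩
    convert hM using 1
    group
  · -- (h⁻¹)⁻¹ * g^m = h * g^m ∈ P
    obtain ⟨M, hM⟩ := claimCj hP hc hg a (g ^ a * h) ha
    refine ⟨M, ?_⟩
    convert hM using 1
    group

end Bd

/-- A finite nonempty subset of `P` has a maximum-ish element. -/
lemma finset_max {P : Set G} (hP : IsPositiveCone P) :
    ∀ T : Finset G, T.Nonempty → (∀ t ∈ T, t ∈ P) →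
      ∃ g ∈ T, ∀ t ∈ T, t = g ∨ t⁻¹ * g ∈ P := by
  haveI := Classical.decEq G
  intro T
  induction T using Finset.induction with
  | empty => intro h; simp at h
  | @insert a T ha ih =>
    intro _ hsub
    rcases T.eq_empty_or_nonempty with rfl | hne
    · exact ⟨a, by simp, by simp⟩
    · obtain ⟨g, hgT, hmax⟩ := ih hne (fun t ht => hsub t (Finset.mem_insert_of_mem ht))
      have haP : a ∈ P := hsub a (Finset.mem_insert_self a T)
      have hgP : g ∈ P := hsub g (Finset.mem_insert_of_mem hgT)
      by_cases hag : a = g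
      · exact ⟨g, Finset.mem_insert_of_mem hgT, by
          intro t ht
          rcases Finset.mem_insert.mp ht with rfl | ht
          · left; exact hag
          · exact hmax t ht⟩
      by_cases h1 : a⁻¹ * g ∈ P
      · refine ⟨g, Finset.mem_insert_of_mem hgT, ?_⟩
        intro t ht
        rcases Finset.mem_insert.mp ht with rfl | ht
        · right; exact h1
        · exact hmax t ht
      · have hga : g⁻¹ * a ∈ P := by
          have hne1 : a⁻¹ * g ≠ 1 := fun h => hag (inv_mul_eq_one.mp h)
          have := cone_inv_mem hP hne1 h1
          simpa using this
        refine ⟨a, Finset.mem_insert_self a T, ?_⟩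
        intro t ht
        rcases Finset.mem_insert.mp ht with rfl | ht
        · left; rfl
        · rcases hmax t ht with rfl | htg
          · right; exact hga
          · right
            have := cone_mul hP htg hga
            convert this using 1; group

end Aux

section Main

variable {G : Type*} [Group G]

lemma conj_pow' (f g : G) (n : ℕ) : (f * g * f⁻¹) ^ n = f * g ^ n * f⁻¹ := by
  induction n with
  | zero => group
  | succ k ih => rw [pow_succ, ih, pow_succ]; group

/-- Positive cofinal elements have positive conjugates. -/
lemma conj_mem {P : Set G} (hP : IsPositiveCone P) {g : G} (hg : g ∈ P)
    (hb : ∀ h : G, Bound P g h) : ∀ f : G, f⁻¹ * g * f ∈ P := by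
  intro f
  by_contra hq
  have hq1 : f⁻¹ * g * f ≠ 1 := by
    intro h
    apply cone_ne_one hP hg
    have : g = f * (f⁻¹ * g * f) * f⁻¹ := by group
    rw [this, h]; group
  have hqi : f⁻¹ * g⁻¹ * f ∈ P := by
    have := cone_inv_mem hP hq1 hq
    convert this using 1; group
  obtain ⟨⟨a, ha⟩, ⟨b, hb'⟩⟩ := hb f
  have hx : f⁻¹ * g ^ (a + b) * f ∈ P := by
    have := cone_mul hP hb' ha
    convert this using 1
    rw [pow_add]; group
  rcases Nat.eq_zero_or_pos (a + b) with h0 | hpos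
  · rw [h0] at hx
    apply cone_one hP
    simpa using hx
  · have hy : (f⁻¹ * g⁻¹ * f) ^ (a + b) ∈ P := cone_pow hP hqi _ hpos
    have hy' : f⁻¹ * (g⁻¹) ^ (a + b) * f ∈ P := by
      have e : (f⁻¹ * g⁻¹ * f) ^ (a+b) = f⁻¹ * (g⁻¹) ^ (a+b) * f := by
        have := conj_pow' f⁻¹ g⁻¹ (a+b); simpa using this
      rwa [e] at hy
    have h1 : (1 : G) ∈ P := by
      have := cone_mul hP hx hy'
      have e : (f⁻¹ * g ^ (a+b) * f) * (f⁻¹ * (g⁻¹) ^ (a+b) * f) = 1 := by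
        rw [inv_pow]; group
      rwa [e] at this
    exact cone_one hP h1

/-- Existence of a positive element bounding everything, for a f.g. group all of whose
orders (in particular `P` and its reverse) are Conradian. -/
lemma exists_cofinal [Nontrivial G] [Group.FG G] {P : Set G} (hP : IsPositiveCone P)
    (hc : IsConradian P) (hc' : IsConradian {x : G | x⁻¹ ∈ P}) :
    ∃ g ∈ P, ∀ h : G, Bound P g h := by
  haveI := Classical.decEq G
  haveI : DecidablePred (· ∈ P) := fun _ => Classical.dec _
  obtain ⟨S, hScl, hSfin⟩ := Group.fg_iff.mp ‹Group.FG G›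
  obtain ⟨x, hx1⟩ := exists_ne (1 : G)
  have hxS : x ∈ Subgroup.closure S := by rw [hScl]; trivial
  have hSne : ∃ s ∈ S, s ≠ (1 : G) := by
    by_contra h
    push_neg at h
    have hle : Subgroup.closure S ≤ ⊥ := (Subgroup.closure_le ⊥).mpr
      (fun s hs => by simp [h s hs])
    exact hx1 (Subgroup.mem_bot.mp (hle hxS))
  obtain ⟨s₀, hs₀S, hs₀1⟩ := hSne
  set T : Finset G :=
    (hSfin.toFinset.erase 1).image (fun s => if s ∈ P then s else s⁻¹) with hT
  have hTsub : ∀ t ∈ T, t ∈ P := by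
    intro t ht
    rw [hT, Finset.mem_image] at ht
    obtain ⟨s, hs, rfl⟩ := ht
    have hs1 : s ≠ 1 := (Finset.mem_erase.mp hs).1
    by_cases hsP : s ∈ P
    · simpa [hsP] using hsP
    · simp only [hsP, if_false]
      exact cone_inv_mem hP hs1 hsP
  have hTne : T.Nonempty := by
    refine ⟨if s₀ ∈ P then s₀ else s₀⁻¹, ?_⟩
    rw [hT, Finset.mem_image]
    exact ⟨s₀, Finset.mem_erase.mpr ⟨hs₀1, hSfin.mem_toFinset.mpr hs₀S⟩, rfl⟩
  obtain ⟨g, hgT, hmax⟩ := finset_max hP T hTne hTsub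
  have hgP : g ∈ P := hTsub g hgT
  refine ⟨g, hgP, ?_⟩
  intro h
  have hh : h ∈ Subgroup.closure S := by rw [hScl]; trivial
  induction hh using Subgroup.closure_induction with
  | one => exact bound_one hP hc hc' hgP
  | mul u v _ _ hu hv => exact bound_mul hP hc hc' hgP hu hv
  | inv u _ hu => exact bound_inv hP hc hc' hgP hu
  | mem s hsS =>
    by_cases hs1 : s = 1
    · rw [hs1]; exact bound_one hP hc hc' hgP
    by_cases hsP : s ∈ P
    · have hsT : s ∈ T := by
        rw [hT, Finset.mem_image]
        exact ⟨s, Finset.mem_erase.mpr ⟨hs1, hSfin.mem_toFinset.mpr hsS⟩, if_pos hsP⟩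
      have key : s⁻¹ * g ^ 2 ∈ P := by
        rcases hmax s hsT with rfl | hlt
        · have e : s⁻¹ * s ^ 2 = s := by group
          rw [e]; exact hsP
        · have := cone_mul hP hlt hgP
          have e : s⁻¹ * g * g = s⁻¹ * g ^ 2 := by rw [pow_two, mul_assoc]
          rwa [e] at this
      exact ⟨⟨1, by rw [pow_one]; exact cone_mul hP hgP hsP⟩, ⟨2, key⟩⟩
    · have hsi : s⁻¹ ∈ P := cone_inv_mem hP hs1 hsP
      have hsT : s⁻¹ ∈ T := by
        rw [hT, Finset.mem_image]
        exact ⟨s, Finset.mem_erase.mpr ⟨hs1, hSfin.mem_toFinset.mpr hsS⟩, if_neg hsP⟩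
      have key : s * g ^ 2 ∈ P := by
        rcases hmax s⁻¹ hsT with heq | hlt
        · have hs : s = g⁻¹ := by rw [← heq]; group
          rw [hs]
          have e : g⁻¹ * g ^ 2 = g := by group
          rw [e]; exact hgP
        · have hlt' : s * g ∈ P := by
            have e : s⁻¹⁻¹ * g = s * g := by group
            rwa [e] at hlt
          have := cone_mul hP hlt' hgP
          have e : s * g * g = s * g ^ 2 := by rw [pow_two, mul_assoc]
          rwa [e] at this
      constructor
      · obtain ⟨M, hM⟩ := claimDj hP hc' hgP 2 (s * g ^ 2) key
        refine ⟨M, ?_⟩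
        have e : g ^ M * (s * g ^ 2) * (g ^ 2)⁻¹ = g ^ M * s := by group
        rwa [e] at hM
      · exact ⟨1, by rw [pow_one]; exact cone_mul hP hsi hgP⟩

theorem no_dense_orbit_of_fg_conradian_aux {G : Type*} [Group G] [Nontrivial G]
    [Group.FG G] [Nonempty (LO G)] (hconr : ∀ P : LO G, IsConradian P.1) :
    ∀ P : LO G, closure (orb P) ⊂ Set.univ := by
  intro P
  have hP : IsPositiveCone P.1 := P.2
  have hc : IsConradian P.1 := hconr P
  let Qbar : LO G := ⟨{x : G | x⁻¹ ∈ P.1}, inv_cone hP⟩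
  have hc' : IsConradian {x : G | x⁻¹ ∈ P.1} := hconr Qbar
  obtain ⟨g, hg, hbd⟩ := exists_cofinal hP hc hc'
  set U : Set (LO G) := {Q : LO G | g ∈ Q.1} with hUdef
  have horb : orb P ⊆ U := by
    rintro Q ⟨f, hf⟩
    show g ∈ Q.1
    rw [hf]
    exact ⟨f⁻¹ * g * f, conj_mem hP hg hbd f, by group⟩
  have hU : IsClosed U := by
    letI tP : TopologicalSpace Prop := ⊥
    haveI : DiscreteTopology Prop := ⟨rfl⟩
    have hcl : IsClosed {φ : G → Prop | φ g} := by
      have hco : Continuous (fun φ : G → Prop => φ g) := continuous_apply g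
      exact (isClosed_discrete {p : Prop | p}).preimage hco
    exact hcl.preimage continuous_induced_dom
  have hsub : closure (orb P) ⊆ U := closure_minimal horb hU
  rw [Set.ssubset_univ_iff]
  intro heq
  have hQbar : Qbar ∈ closure (orb P) := by rw [heq]; trivial
  have : g ∈ Qbar.1 := hsub hQbar
  exact cone_not_inv_mem hP hg this

end Main

theorem no_dense_orbit_of_fg_conradian {G : Type*} [Group G] [Nontrivial G]
    [Group.FG G] [Nonempty (LO G)] (hconr : ∀ P : LO G, IsConradian P.1) :
    ∀ P : LO G, closure (orb P) ⊂ Set.univ :=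
  no_dense_orbit_of_fg_conradian_aux hconr
end

section
/- Let F_n be the free group on n > 1 generators. Then the space of left orderings LO(F_n) has no isolated points. -/
namespace NoIsoAux


/-! ### Bending order isomorphisms of ℚ -/

noncomputable def bendFun (L c d t : ℚ) : ℚ :=
  if t ≤ L then t else L + (t - L) * ((d - L) / (c - L))

lemma bendFun_strictMono {L c d : ℚ} (hc : L < c) (hd : L < d) :
    StrictMono (bendFun L c d) := by
  intro a b hab
  have hk : 0 < (d - L) / (c - L) := div_pos (by linarith) (by linarith)
  unfold bendFun
  split_ifs with h1 h2 h2
  · exact hab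
  · push_neg at h2
    have : 0 < (b - L) * ((d - L) / (c - L)) := mul_pos (by linarith) hk
    linarith
  · exact absurd (hab.le.trans h2) h1
  · push_neg at h1 h2
    have : (a - L) * ((d - L) / (c - L)) < (b - L) * ((d - L) / (c - L)) :=
      mul_lt_mul_of_pos_right (by linarith) hk
    linarith

lemma bendFun_leftInv {L c d : ℚ} (hc : L < c) (hd : L < d) (t : ℚ) :
    bendFun L d c (bendFun L c d t) = t := by
  have hc' : c - L ≠ 0 := by linarith
  have hd' : d - L ≠ 0 := by linarith
  unfold bendFun
  by_cases h : t ≤ L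
  · simp [h]
  · rw [if_neg h]
    push_neg at h
    have hk : 0 < (d - L) / (c - L) := div_pos (by linarith) (by linarith)
    have h1 : ¬ (L + (t - L) * ((d - L) / (c - L)) ≤ L) := by
      push_neg
      have : 0 < (t - L) * ((d - L) / (c - L)) := mul_pos (by linarith) hk
      linarith
    rw [if_neg h1]
    field_simp
    ring

noncomputable def bend (L c d : ℚ) (hc : L < c) (hd : L < d) : ℚ ≃o ℚ :=
  StrictMono.orderIsoOfSurjective (bendFun L c d) (bendFun_strictMono hc hd)
    (fun y => ⟨bendFun L d c y, bendFun_leftInv hd hc y⟩)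

lemma bend_apply (L c d : ℚ) (hc : L < c) (hd : L < d) (t : ℚ) :
    bend L c d hc hd t = bendFun L c d t := rfl

lemma bend_of_le {L c d : ℚ} (hc : L < c) (hd : L < d) {t : ℚ} (ht : t ≤ L) :
    bend L c d hc hd t = t := by
  rw [bend_apply, bendFun, if_pos ht]

lemma bend_c {L c d : ℚ} (hc : L < c) (hd : L < d) :
    bend L c d hc hd c = d := by
  rw [bend_apply, bendFun, if_neg (not_le.mpr hc)]
  have hc' : c - L ≠ 0 := by linarith
  field_simp
  ring

/-! ### Interpolation of a finite monotone set of pairs -/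

lemma exists_interp : ∀ (k : ℕ) (s : Finset (ℚ × ℚ)), s.card ≤ k →
    (∀ p ∈ s, ∀ q ∈ s, p.1 < q.1 ↔ p.2 < q.2) →
    ∃ f : ℚ ≃o ℚ, ∀ p ∈ s, f p.1 = p.2 := by
  intro k
  induction k with
  | zero =>
    intro s hs _
    have : s = ∅ := Finset.card_eq_zero.mp (Nat.le_zero.mp hs)
    subst this
    exact ⟨OrderIso.refl ℚ, by simp⟩
  | succ k ih =>
    intro s hcard hmono
    rcases s.eq_empty_or_nonempty with rfl | hne
    · exact ⟨OrderIso.refl ℚ, by simp⟩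
    obtain ⟨m, hm, hmmax⟩ := s.exists_max_image Prod.fst hne
    have hsub : ∀ p ∈ s.erase m, p ∈ s := fun p hp => Finset.mem_of_mem_erase hp
    have hcard' : (s.erase m).card ≤ k := by
      have := Finset.card_erase_of_mem hm; omega
    obtain ⟨f₀, hf₀⟩ := ih (s.erase m) hcard'
      (fun p hp q hq => hmono p (hsub p hp) q (hsub q hq))
    have hlt : ∀ p ∈ s.erase m, p.1 < m.1 ∧ p.2 < m.2 := by
      intro p hp
      have hps := hsub p hp
      have h1 : p.1 ≤ m.1 := hmmax p hps
      have hne' : p ≠ m := Finset.ne_of_mem_erase hp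
      have h1' : p.1 ≠ m.1 := by
        intro he
        have h2 : ¬ p.2 < m.2 := by rw [← hmono p hps m hm, he]; exact lt_irrefl _
        have h3 : ¬ m.2 < p.2 := by rw [← hmono m hm p hps, he]; exact lt_irrefl _
        exact hne' (Prod.ext he (le_antisymm (not_lt.mp h3) (not_lt.mp h2)))
      have h1'' : p.1 < m.1 := lt_of_le_of_ne h1 h1'
      exact ⟨h1'', (hmono p hps m hm).mp h1''⟩
    rcases (s.erase m).eq_empty_or_nonempty with he | hne'
    · refine ⟨OrderIso.addRight (m.2 - m.1), ?_⟩
      intro p hp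
      have hpm : p = m := by
        by_contra hpm
        have : p ∈ s.erase m := Finset.mem_erase.mpr ⟨hpm, hp⟩
        rw [he] at this
        exact absurd this (Finset.notMem_empty p)
      subst hpm
      simp
    · have hne'' : ((s.erase m).image Prod.snd).Nonempty := hne'.image _
      set L := ((s.erase m).image Prod.snd).max' hne'' with hL
      obtain ⟨p₀, hp₀s, hp₀⟩ := Finset.mem_image.mp (((s.erase m).image Prod.snd).max'_mem hne'')
      have hLlt2 : L < m.2 := by rw [hL, ← hp₀]; exact (hlt p₀ hp₀s).2
      have hf₀m : L < f₀ m.1 := by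
        rw [hL, ← hp₀, ← hf₀ p₀ hp₀s]
        exact f₀.strictMono (hlt p₀ hp₀s).1
      refine ⟨f₀.trans (bend L (f₀ m.1) m.2 hf₀m hLlt2), ?_⟩
      intro p hp
      rcases eq_or_ne p m with rfl | hpm
      · rw [OrderIso.trans_apply, bend_c]
      · have hp' : p ∈ s.erase m := Finset.mem_erase.mpr ⟨hpm, hp⟩
        have hple : p.2 ≤ L := Finset.le_max' _ _ (Finset.mem_image_of_mem _ hp')
        rw [OrderIso.trans_apply, hf₀ p hp', bend_of_le _ _ hple]




/-! ### Embedding a left-ordered countable group into ℚ -/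

lemma exists_iota {G : Type*} [Group G] [Countable G] {P : Set G} (hP : IsPositiveCone P) :
    ∃ ι : G → ℚ, Function.Injective ι ∧ ∀ a b : G, ι a < ι b ↔ a⁻¹ * b ∈ P := by
  obtain ⟨hmul, hone, htri⟩ := hP
  set r : G → G → Prop := fun a b => a⁻¹ * b ∈ P with hr
  haveI hSTO : IsStrictTotalOrder G r := by
    refine { trichotomous := ?_, irrefl := ?_, trans := ?_ }
    · intro a b hab' hba'
      by_contra hab
      have h1 : a⁻¹ * b ≠ 1 := by
        intro h
        exact hab (by rw [← one_mul b, ← mul_inv_cancel a, mul_assoc, h, mul_one])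
      have h2 : (a⁻¹ * b)⁻¹ ∈ P := by
        by_contra h3
        exact hab' ((htri _ h1).mpr h3)
      exact hba' (by show b⁻¹ * a ∈ P; simpa [mul_inv_rev] using h2)
    · intro a
      show ¬ (a⁻¹ * a ∈ P)
      simpa using hone
    · intro a b c hab hbc
      have := hmul _ hab _ hbc
      show a⁻¹ * c ∈ P
      have h : a⁻¹ * b * (b⁻¹ * c) = a⁻¹ * c := by group
      rwa [h] at this
  letI : DecidableRel r := fun a b => Classical.dec _
  letI : LinearOrder G := linearOrderOfSTO r
  obtain ⟨e⟩ := Order.embedding_from_countable_to_dense (α := G) (β := ℚ)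
  refine ⟨e, e.injective, ?_⟩
  intro a b
  rw [show (e a < e b) ↔ a < b from e.lt_iff_lt]
  exact Iff.rfl

/-! ### Word lemmas for free groups -/

open FreeGroup

variable {α : Type*} [DecidableEq α]

lemma reduced_of_cons {a : α × Bool} {l : List (α × Bool)} (h : reduce (a :: l) = a :: l) :
    reduce l = l := by
  rcases hl : reduce l with _ | ⟨hd, tl⟩
  · rw [reduce.cons, hl] at h
    have h' : [a] = a :: l := h
    have hl0 : l = [] := by simpa using h'
    subst hl0
    rfl
  · rw [reduce.cons, hl] at h
    have h' : (if a.1 = hd.1 ∧ a.2 = !hd.2 then tl else a :: hd :: tl) = a :: l := h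
    by_cases hc : a.1 = hd.1 ∧ a.2 = !hd.2
    · rw [if_pos hc] at h'
      exfalso
      have hlen : (reduce l).length ≤ l.length := Red.length_le reduce.red
      rw [hl] at hlen
      have : tl.length = l.length + 1 := by rw [h']; simp
      simp at hlen
      omega
    · rw [if_neg hc] at h'
      have h2 : hd :: tl = l := by
        simpa using h'
      exact h2

lemma reduced_cons {a hd : α × Bool} {tl : List (α × Bool)}
    (h : reduce (hd :: tl) = hd :: tl) (hne : ¬(a.1 = hd.1 ∧ a.2 = !hd.2)) :
    reduce (a :: hd :: tl) = a :: hd :: tl := by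
  rw [reduce.cons, h]
  show (if a.1 = hd.1 ∧ a.2 = !hd.2 then tl else a :: hd :: tl) = a :: hd :: tl
  rw [if_neg hne]

lemma reduced_tails {l : List (α × Bool)} (h : reduce l = l) :
    ∀ t ∈ l.tails, reduce t = t := by
  induction l with
  | nil => intro t ht; simp at ht; rw [ht]; rfl
  | cons a l ih =>
    intro t ht
    rw [List.tails_cons] at ht
    rcases List.mem_cons.mp ht with rfl | ht'
    · exact h
    · exact ih (reduced_of_cons h) t ht'

lemma mk_single_true (i : α) : mk [(i, true)] = of i := rfl

lemma mk_single_false (i : α) : mk [(i, false)] = (of i)⁻¹ := by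
  rw [← mk_single_true, inv_mk]
  rfl

lemma letter_mk (i : α) (b : Bool) : mk [(i, b)] = (cond b (of i) (of i)⁻¹) := by
  cases b
  · exact mk_single_false i
  · exact mk_single_true i

lemma letter_toWord (i : α) (b : Bool) (g : FreeGroup α)
    (h : ∀ hd ∈ (toWord g).head?, hd.1 ≠ i) :
    toWord ((cond b (of i) (of i)⁻¹) * g) = (i, b) :: toWord g := by
  rw [← letter_mk, ← mk_toWord (x := g), mul_mk, toWord_mk, mk_toWord]
  show reduce ((i, b) :: toWord g) = _
  rcases hw : toWord g with _ | ⟨hd, tl⟩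
  · rfl
  · have hred : reduce (hd :: tl) = hd :: tl := by rw [← hw]; exact reduce_toWord g
    refine reduced_cons hred ?_
    rintro ⟨h1, -⟩
    exact h hd (by rw [hw]; rfl) h1.symm

lemma letter_norm (i : α) (b : Bool) (g : FreeGroup α)
    (h : ∀ hd ∈ (toWord g).head?, hd.1 ≠ i) :
    FreeGroup.norm ((cond b (of i) (of i)⁻¹) * g) = FreeGroup.norm g + 1 := by
  unfold FreeGroup.norm
  rw [letter_toWord i b g h]
  simp



lemma eval_lemma {n : ℕ} (f : Fin n → (ℚ ≃o ℚ)) (ι : FreeGroup (Fin n) → ℚ)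
    (V : Finset (FreeGroup (Fin n)))
    (hf : ∀ (i : Fin n) (a : FreeGroup (Fin n)), a ∈ V → of i * a ∈ V →
      (f i) (ι a) = ι (of i * a)) :
    ∀ l : List (Fin n × Bool), reduce l = l → (∀ t ∈ l.tails, mk t ∈ V) →
      (FreeGroup.lift f (mk l)) (ι 1) = ι (mk l) := by
  intro l
  induction l with
  | nil =>
    intro _ _
    show (FreeGroup.lift f (mk [])) (ι 1) = ι (mk [])
    have h1 : (mk [] : FreeGroup (Fin n)) = 1 := rfl
    rw [h1, _root_.map_one]
    rfl
  | cons a t ih =>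
    intro hred htails
    have hred' : reduce t = t := reduced_of_cons hred
    have htails' : ∀ u ∈ t.tails, mk u ∈ V := fun u hu =>
      htails u (by rw [List.tails_cons]; exact List.mem_cons_of_mem _ hu)
    have hmemt : mk t ∈ V := htails' t (by simp [List.mem_tails])
    have hmem : mk (a :: t) ∈ V := htails _ (by simp [List.mem_tails])
    have hsplit : (mk (a :: t) : FreeGroup (Fin n)) = mk [a] * mk t := by
      rw [mul_mk]; rfl
    rw [hsplit, _root_.map_mul, RelIso.mul_apply, ih hred' htails']
    obtain ⟨i, b⟩ := a
    cases b
    · have hb : (mk ((i,false) :: t) : FreeGroup (Fin n)) = (of i)⁻¹ * mk t := by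
        rw [← mk_single_false, mul_mk]; rfl
      have hofb : of i * mk ((i,false) :: t) = mk t := by rw [hb]; group
      have hstep := hf i (mk ((i,false) :: t)) hmem (by rw [hofb]; exact hmemt)
      rw [hofb] at hstep
      rw [mk_single_false, _root_.map_inv, FreeGroup.lift_apply_of, ← hstep, ← hb,
        RelIso.inv_apply_self]
    · have hb : of i * mk t = mk ((i,true) :: t) := by
        rw [← mk_single_true, mul_mk]; rfl
      have hstep := hf i (mk t) hmemt (by rw [hb]; exact hmem)
      rw [mk_single_true, FreeGroup.lift_apply_of, hstep, hb]


/-- The main construction: a different positive cone agreeing on a finite set. -/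
lemma main_construction {n : ℕ} (hn : 1 < n) (P : Set (FreeGroup (Fin n)))
    (hP : IsPositiveCone P) (S : Finset (FreeGroup (Fin n))) :
    ∃ Q : Set (FreeGroup (Fin n)), IsPositiveCone Q ∧ (∀ g ∈ S, (g ∈ Q ↔ g ∈ P)) ∧ Q ≠ P := by
  classical
  haveI : Countable (FreeGroup (Fin n)) := FreeGroup.toWord_injective.countable
  obtain ⟨ι, hinj, hι⟩ := exists_iota hP
  obtain ⟨hmul, hone, htri⟩ := hP
  set R : ℕ := S.sup FreeGroup.norm with hR
  -- the ball of radius R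
  have hballfin : {g : FreeGroup (Fin n) | FreeGroup.norm g ≤ R}.Finite := by
    have h1 : {l : List (Fin n × Bool) | l.length ≤ R}.Finite := List.finite_length_le _ R
    exact Set.Finite.preimage (Set.injOn_of_injective FreeGroup.toWord_injective) h1
  set B : Finset (FreeGroup (Fin n)) := hballfin.toFinset with hBdef
  have hmemB : ∀ g, g ∈ B ↔ FreeGroup.norm g ≤ R := fun g => hballfin.mem_toFinset
  have hSB : ∀ s ∈ S, s ∈ B := fun s hs => (hmemB s).mpr (Finset.le_sup hs)
  have hB1 : (1 : FreeGroup (Fin n)) ∈ B := (hmemB 1).mpr (by simp [FreeGroup.norm_one])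
  -- maximal element of the ball
  obtain ⟨v₀, hv₀B, hv₀max⟩ := B.exists_max_image ι ⟨1, hB1⟩
  -- tails of elements of the ball are in the ball
  have htailsB : ∀ g ∈ B, ∀ t ∈ (FreeGroup.toWord g).tails, FreeGroup.mk t ∈ B := by
    intro g hg t ht
    have hred : reduce t = t := reduced_tails (FreeGroup.reduce_toWord g) t ht
    have hlen : t.length ≤ (FreeGroup.toWord g).length := by
      obtain ⟨pre, hpre⟩ := List.mem_tails _ _ |>.mp ht
      rw [← hpre]; simp
    rw [hmemB]
    show (FreeGroup.mk t).toWord.length ≤ R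
    rw [FreeGroup.toWord_mk, hred]
    exact le_trans hlen ((hmemB g).mp hg)
  -- pick an index avoiding the head of v₀
  have hn0 : 0 < n := by omega
  obtain ⟨i₀, hi₀⟩ : ∃ i : Fin n, ∀ hd ∈ (FreeGroup.toWord v₀).head?, hd.1 ≠ i := by
    rcases hw : (FreeGroup.toWord v₀).head? with _ | hd
    · exact ⟨⟨0, hn0⟩, by simp⟩
    · by_cases h : hd.1 = ⟨0, hn0⟩
      · refine ⟨⟨1, hn⟩, ?_⟩
        intro hd' hmem
        rw [Option.mem_some_iff] at hmem
        rw [show hd'.1 = hd.1 from by rw [hmem], h]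
        simp [Fin.ext_iff]
      · refine ⟨⟨0, hn0⟩, ?_⟩
        intro hd' hmem
        rw [Option.mem_some_iff] at hmem
        rw [show hd'.1 = hd.1 from by rw [hmem]]
        exact h
  -- pick the sign so that the letter raises v₀
  obtain ⟨b, hw₁gt⟩ : ∃ b : Bool,
      ι v₀ < ι ((cond b (FreeGroup.of i₀) (FreeGroup.of i₀)⁻¹) * v₀) := by
    have hv1 : v₀⁻¹ * (FreeGroup.of i₀ * v₀) ≠ 1 := by
      intro h
      have h2 : FreeGroup.of i₀ = 1 := by
        have h5 : v₀ * (v₀⁻¹ * (FreeGroup.of i₀ * v₀)) * v₀⁻¹ = FreeGroup.of i₀ := by group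
        rw [h, mul_one, mul_inv_cancel] at h5
        exact h5.symm
      exact FreeGroup.of_ne_one i₀ h2
    by_cases hc : v₀⁻¹ * (FreeGroup.of i₀ * v₀) ∈ P
    · exact ⟨true, by rw [hι]; exact hc⟩
    · refine ⟨false, ?_⟩
      rw [hι]
      have h3 : (v₀⁻¹ * (FreeGroup.of i₀ * v₀))⁻¹ ∈ P := by
        by_contra hx
        exact hc ((htri _ hv1).mpr hx)
      have h4 : (v₀⁻¹ * (FreeGroup.of i₀ * v₀))⁻¹ = v₀⁻¹ * ((FreeGroup.of i₀)⁻¹ * v₀) := by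
        group
      rw [h4] at h3
      exact h3
  set w₁ : FreeGroup (Fin n) := (cond b (FreeGroup.of i₀) (FreeGroup.of i₀)⁻¹) * v₀ with hw₁def
  have hw₁word : FreeGroup.toWord w₁ = (i₀, b) :: FreeGroup.toWord v₀ :=
    letter_toWord i₀ b v₀ hi₀
  have hw₁B : w₁ ∉ B := fun hmem => absurd hw₁gt (not_lt.mpr (hv₀max w₁ hmem))
  have hw₁normgt : R < FreeGroup.norm w₁ := by
    by_contra h
    push_neg at h
    exact hw₁B ((hmemB w₁).mpr h)
  -- the finite set V
  set V : Finset (FreeGroup (Fin n)) := insert w₁ B with hVdef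
  have hVmem : ∀ a, a ∈ V ↔ a = w₁ ∨ a ∈ B := fun a => Finset.mem_insert
  have hVlt : ∀ a ∈ V, a ≠ w₁ → ι a < ι w₁ := by
    intro a haV hane
    rcases (hVmem a).mp haV with rfl | haB
    · exact absurd rfl hane
    · exact lt_of_le_of_lt (hv₀max a haB) hw₁gt
  -- pick j ≠ i₀
  obtain ⟨j, hj⟩ : ∃ j : Fin n, j ≠ i₀ := by
    by_cases h : i₀ = ⟨0, hn0⟩
    · exact ⟨⟨1, hn⟩, by rw [h]; simp [Fin.ext_iff]⟩
    · exact ⟨⟨0, hn0⟩, fun hh => h hh.symm⟩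
  have hjhead : ∀ hd ∈ (FreeGroup.toWord w₁).head?, hd.1 ≠ j := by
    rw [hw₁word]
    intro hd hmem
    simp only [List.head?_cons, Option.mem_some_iff] at hmem
    rw [show hd.1 = i₀ from by rw [← hmem]]
    exact fun hh => hj (hh.symm)
  have hjnorm : ∀ c : Bool, FreeGroup.norm ((cond c (FreeGroup.of j) (FreeGroup.of j)⁻¹) * w₁)
      = FreeGroup.norm w₁ + 1 := fun c => letter_norm j c w₁ hjhead
  have hjV : ∀ c : Bool, (cond c (FreeGroup.of j) (FreeGroup.of j)⁻¹) * w₁ ∉ V := by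
    intro c hmem
    rcases (hVmem _).mp hmem with heq | hB'
    · have := hjnorm c
      rw [heq] at this
      omega
    · have := (hmemB _).mp hB'
      rw [hjnorm c] at this
      omega
  have hjV1 : FreeGroup.of j * w₁ ∉ V := by
    have := hjV true
    simpa using this
  have hjV2 : (FreeGroup.of j)⁻¹ * w₁ ∉ V := by
    have := hjV false
    simpa using this
  -- the witness element
  set w₀ : FreeGroup (Fin n) := w₁⁻¹ * (FreeGroup.of j * w₁) with hw₀def
  have hw₀ne1 : w₀ ≠ 1 := by
    intro h
    have h2 : FreeGroup.of j = 1 := by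
      have h5 : w₁ * (w₁⁻¹ * (FreeGroup.of j * w₁)) * w₁⁻¹ = FreeGroup.of j := by group
      rw [hw₀def] at h
      rw [h, mul_one, mul_inv_cancel] at h5
      exact h5.symm
    exact FreeGroup.of_ne_one j h2
  -- base constraint pairs
  set base : Fin n → Finset (ℚ × ℚ) := fun i =>
    (V.filter (fun a => FreeGroup.of i * a ∈ V)).image
      (fun a => (ι a, ι (FreeGroup.of i * a))) with hbasedef
  have hbasej : ∀ p ∈ base j, p.1 < ι w₁ ∧ p.2 < ι w₁ := by
    intro p hp
    obtain ⟨a, ha, rfl⟩ := Finset.mem_image.mp hp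
    obtain ⟨haV, haj⟩ := Finset.mem_filter.mp ha
    constructor
    · refine hVlt a haV ?_
      intro hh
      rw [hh] at haj
      exact hjV1 haj
    · refine hVlt _ haj ?_
      intro hh
      have : a = (FreeGroup.of j)⁻¹ * w₁ := by rw [← hh]; group
      rw [this] at haV
      exact hjV2 haV
  -- choose the tweak target r
  obtain ⟨r, hrtr, hrlt, hrgt⟩ : ∃ r : ℚ, (∀ p ∈ base j, p.2 < r) ∧
      (w₀ ∈ P → r < ι w₁) ∧ (w₀ ∉ P → ι w₁ < r) := by
    by_cases h₀ : w₀ ∈ P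
    · rcases Finset.eq_empty_or_nonempty ((base j).image Prod.snd) with he | hTne
      · refine ⟨ι w₁ - 1, ?_, fun _ => by linarith, fun hx => absurd h₀ hx⟩
        intro p hp
        have : p.2 ∈ (base j).image Prod.snd := Finset.mem_image_of_mem _ hp
        rw [he] at this
        exact absurd this (Finset.notMem_empty _)
      · set M := ((base j).image Prod.snd).max' hTne with hM
        have hMlt : M < ι w₁ := by
          obtain ⟨p₀, hp₀, hp₀eq⟩ := Finset.mem_image.mp
            (((base j).image Prod.snd).max'_mem hTne)
          rw [hM, ← hp₀eq]
          exact (hbasej p₀ hp₀).2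
        refine ⟨(M + ι w₁) / 2, ?_, fun _ => by linarith, fun hx => absurd h₀ hx⟩
        intro p hp
        have h1 : p.2 ≤ M := Finset.le_max' _ _ (Finset.mem_image_of_mem _ hp)
        linarith
    · refine ⟨ι w₁ + 1, ?_, fun hx => absurd hx h₀, fun _ => by linarith⟩
      intro p hp
      have := (hbasej p hp).2
      linarith
  -- the full constraint sets
  set Con : Fin n → Finset (ℚ × ℚ) := fun i =>
    if i = j then insert (ι w₁, r) (base i) else base i with hCondef
  have hbasemono : ∀ i : Fin n, ∀ p ∈ base i, ∀ q ∈ base i, (p.1 < q.1 ↔ p.2 < q.2) := by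
    intro i p hp q hq
    obtain ⟨a, ha, rfl⟩ := Finset.mem_image.mp hp
    obtain ⟨a', ha', rfl⟩ := Finset.mem_image.mp hq
    simp only
    rw [hι, hι]
    have : (FreeGroup.of i * a)⁻¹ * (FreeGroup.of i * a') = a⁻¹ * a' := by group
    rw [this]
  have hconmono : ∀ i : Fin n, ∀ p ∈ Con i, ∀ q ∈ Con i, (p.1 < q.1 ↔ p.2 < q.2) := by
    intro i p hp q hq
    by_cases hij : i = j
    · rw [hCondef] at hp hq
      simp only [hij, eq_self_iff_true, if_true] at hp hq
      rcases Finset.mem_insert.mp hp with rfl | hp' <;>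
        rcases Finset.mem_insert.mp hq with hq' | hq'
      · rw [hq']
        simp [lt_self_iff_false]
      · have h1 := hbasej q hq'
        constructor
        · intro h; exact absurd (h.trans h1.1) (lt_irrefl _)
        · intro h; exact absurd (h.trans (hrtr q hq')) (lt_irrefl _)
      · rw [hq']
        simp only
        have h1 := hbasej p hp'
        constructor
        · intro _; exact hrtr p hp'
        · intro _; exact h1.1
      · exact hbasemono j p hp' q hq'
    · rw [hCondef] at hp hq
      simp only [if_neg hij] at hp hq
      exact hbasemono i p hp q hq
  -- the order isomorphisms
  have hfex : ∀ i : Fin n, ∃ f : ℚ ≃o ℚ, ∀ p ∈ Con i, f p.1 = p.2 := fun i =>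
    exists_interp (Con i).card (Con i) le_rfl (hconmono i)
  choose f hfspec using hfex
  have hfbase : ∀ (i : Fin n) (a : FreeGroup (Fin n)), a ∈ V → FreeGroup.of i * a ∈ V →
      (f i) (ι a) = ι (FreeGroup.of i * a) := by
    intro i a haV haiV
    have hpair : (ι a, ι (FreeGroup.of i * a)) ∈ base i :=
      Finset.mem_image_of_mem _ (Finset.mem_filter.mpr ⟨haV, haiV⟩)
    have hpair' : (ι a, ι (FreeGroup.of i * a)) ∈ Con i := by
      rw [hCondef]
      by_cases hij : i = j
      · simp only [if_pos hij]
        exact Finset.mem_insert_of_mem hpair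
      · simp only [if_neg hij]
        exact hpair
    exact hfspec i _ hpair'
  have hftweak : (f j) (ι w₁) = r := by
    have hpair : (ι w₁, r) ∈ Con j := by
      rw [hCondef]
      simp only [if_pos rfl]
      exact Finset.mem_insert_self _ _
    exact hfspec j _ hpair
  -- evaluation
  have heval : ∀ g : FreeGroup (Fin n),
      (∀ t ∈ (FreeGroup.toWord g).tails, FreeGroup.mk t ∈ V) →
      (FreeGroup.lift f g) (ι 1) = ι g := by
    intro g htl
    have := eval_lemma f ι V hfbase (FreeGroup.toWord g) (FreeGroup.reduce_toWord g) htl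
    rwa [FreeGroup.mk_toWord] at this
  have hevalB : ∀ g ∈ B, (FreeGroup.lift f g) (ι 1) = ι g := by
    intro g hg
    refine heval g ?_
    intro t ht
    exact (hVmem _).mpr (Or.inr (htailsB g hg t ht))
  have hevalw₁ : (FreeGroup.lift f w₁) (ι 1) = ι w₁ := by
    refine heval w₁ ?_
    intro t ht
    rw [hw₁word, List.tails_cons] at ht
    rcases List.mem_cons.mp ht with rfl | ht'
    · rw [← hw₁word, FreeGroup.mk_toWord]
      exact (hVmem _).mpr (Or.inl rfl)
    · exact (hVmem _).mpr (Or.inr (htailsB v₀ hv₀B t ht'))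
  -- the new cone
  set Qs : Set (FreeGroup (Fin n)) := {g | ι 1 < (FreeGroup.lift f g) (ι 1) ∨
    ((FreeGroup.lift f g) (ι 1) = ι 1 ∧ g ∈ P)} with hQdef
  have hQone : (1 : FreeGroup (Fin n)) ∉ Qs := by
    rw [hQdef]
    intro h
    simp only [Set.mem_setOf_eq, _root_.map_one] at h
    rcases h with h | ⟨_, h⟩
    · exact absurd h (lt_irrefl _)
    · exact hone h
  have hQcone : IsPositiveCone Qs := by
    refine ⟨?_, hQone, ?_⟩
    · intro a ha b hb
      have hab : (FreeGroup.lift f (a * b)) (ι 1)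
          = (FreeGroup.lift f a) ((FreeGroup.lift f b) (ι 1)) := by
        rw [_root_.map_mul, RelIso.mul_apply]
      rcases ha with ha | ⟨hae, haP⟩ <;> rcases hb with hb | ⟨hbe, hbP⟩
      · left
        rw [hab]
        calc ι 1 < (FreeGroup.lift f a) (ι 1) := ha
          _ < (FreeGroup.lift f a) ((FreeGroup.lift f b) (ι 1)) :=
            (FreeGroup.lift f a).lt_iff_lt.mpr hb
      · left
        rw [hab, hbe]
        exact ha
      · left
        rw [hab]
        calc ι 1 = (FreeGroup.lift f a) (ι 1) := hae.symm
          _ < (FreeGroup.lift f a) ((FreeGroup.lift f b) (ι 1)) :=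
            (FreeGroup.lift f a).lt_iff_lt.mpr hb
      · right
        constructor
        · rw [hab, hbe, hae]
        · exact hmul a haP b hbP
    · intro g hg
      have hginv : (FreeGroup.lift f g⁻¹) (ι 1)
          = (FreeGroup.lift f g)⁻¹ (ι 1) := by rw [_root_.map_inv]
      rcases lt_trichotomy ((FreeGroup.lift f g) (ι 1)) (ι 1) with hlt | heq | hgt
      · -- g ∉ Qs, g⁻¹ ∈ Qs
        have hg1 : g ∉ Qs := by
          rw [hQdef]
          intro h
          rcases h with h | ⟨h, _⟩
          · exact absurd (h.trans hlt) (lt_irrefl _)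
          · rw [h] at hlt; exact absurd hlt (lt_irrefl _)
        have hg2 : g⁻¹ ∈ Qs := by
          rw [hQdef]
          left
          rw [hginv]
          have := ((FreeGroup.lift f g)⁻¹).lt_iff_lt.mpr hlt
          rwa [RelIso.inv_apply_self] at this
        simp only [hg1, hg2]
        tauto
      · have hinv1 : (FreeGroup.lift f g)⁻¹ (ι 1) = ι 1 := by
          conv_lhs => rw [← heq]
          exact RelIso.inv_apply_self _ _
        constructor
        · rintro (h | ⟨_, hP'⟩)
          · rw [heq] at h; exact absurd h (lt_irrefl _)
          · intro hcon
            rcases hcon with h | ⟨_, hPinv⟩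
            · rw [hginv, hinv1] at h; exact absurd h (lt_irrefl _)
            · exact ((htri g hg).mp hP') hPinv
        · intro hnot
          right
          refine ⟨heq, ?_⟩
          by_contra hgP
          apply hnot
          right
          refine ⟨by rw [hginv, hinv1], ?_⟩
          by_contra hginvP
          exact hgP ((htri g hg).mpr hginvP)
      · have hg1 : g ∈ Qs := Or.inl hgt
        have hg2 : g⁻¹ ∉ Qs := by
          rw [hQdef]
          intro h
          have hlt2 : (FreeGroup.lift f g⁻¹) (ι 1) < ι 1 := by
            rw [hginv]
            have := ((FreeGroup.lift f g)⁻¹).lt_iff_lt.mpr hgt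
            rwa [RelIso.inv_apply_self] at this
          rcases h with h | ⟨h, _⟩
          · exact absurd (h.trans hlt2) (lt_irrefl _)
          · rw [h] at hlt2; exact absurd hlt2 (lt_irrefl _)
        simp only [hg1, hg2]
        tauto
  -- agreement on S
  have hagree : ∀ g ∈ S, (g ∈ Qs ↔ g ∈ P) := by
    intro s hs
    rcases eq_or_ne s 1 with rfl | hs1
    · constructor
      · intro h; exact absurd h hQone
      · intro h; exact absurd h hone
    · have hev : (FreeGroup.lift f s) (ι 1) = ι s := hevalB s (hSB s hs)
      constructor
      · rintro (h | ⟨heq, hp⟩)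
        · rw [hev] at h
          have := (hι 1 s).mp h
          simpa using this
        · exact hp
      · intro hp
        left
        rw [hev, hι]
        simpa using hp
  -- the witness
  have hw₀eval : (FreeGroup.lift f w₀) (ι 1) = (FreeGroup.lift f w₁)⁻¹ r := by
    rw [hw₀def]
    rw [_root_.map_mul, _root_.map_mul, _root_.map_inv, FreeGroup.lift_apply_of]
    rw [RelIso.mul_apply, RelIso.mul_apply, hevalw₁, hftweak]
  have hx₀ : (FreeGroup.lift f w₁)⁻¹ (ι w₁) = ι 1 := by
    conv_lhs => rw [← hevalw₁]
    exact RelIso.inv_apply_self _ _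
  have hQP : Qs ≠ P := by
    by_cases h₀ : w₀ ∈ P
    · have hr : r < ι w₁ := hrlt h₀
      have hcmp : (FreeGroup.lift f w₀) (ι 1) < ι 1 := by
        rw [hw₀eval, ← hx₀]
        exact ((FreeGroup.lift f w₁)⁻¹).lt_iff_lt.mpr hr
      have hw₀Q : w₀ ∉ Qs := by
        rw [hQdef]
        intro h
        rcases h with h | ⟨h, _⟩
        · exact absurd (h.trans hcmp) (lt_irrefl _)
        · rw [h] at hcmp; exact absurd hcmp (lt_irrefl _)
      intro heqQP
      rw [heqQP] at hw₀Q
      exact hw₀Q h₀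
    · have hr : ι w₁ < r := hrgt h₀
      have hcmp : ι 1 < (FreeGroup.lift f w₀) (ι 1) := by
        rw [hw₀eval, ← hx₀]
        exact ((FreeGroup.lift f w₁)⁻¹).lt_iff_lt.mpr hr
      have hw₀Q : w₀ ∈ Qs := Or.inl hcmp
      intro heqQP
      rw [heqQP] at hw₀Q
      exact h₀ hw₀Q
  exact ⟨Qs, hQcone, hagree, hQP⟩


end NoIsoAux

theorem free_group_no_isolated_points (n : ℕ) (hn : 1 < n) :
    ∀ P : LO (FreeGroup (Fin n)), ¬ IsOpen ({P} : Set (LO (FreeGroup (Fin n)))) := by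
  intro P hopen
  obtain ⟨t, ht, htP⟩ := hopen
  have hPt : (fun g => g ∈ P.1) ∈ t := by
    have : P ∈ (fun (Q : LO (FreeGroup (Fin n))) (g : FreeGroup (Fin n)) => g ∈ Q.1) ⁻¹' t := by
      rw [htP]; rfl
    exact this
  obtain ⟨S, u, hu, hsub⟩ := (@isOpen_pi_iff (FreeGroup (Fin n)) (fun _ => Prop)
    (fun _ => (⊥ : TopologicalSpace Prop)) t).mp ht _ hPt
  obtain ⟨Q, hQcone, hagree, hQP⟩ := NoIsoAux.main_construction hn P.1 P.2 S
  set QL : LO (FreeGroup (Fin n)) := ⟨Q, hQcone⟩ with hQL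
  have hQmem : (fun g => g ∈ QL.1) ∈ (S : Set (FreeGroup (Fin n))).pi u := by
    rw [Set.mem_pi]
    intro g hg
    have heq : (g ∈ QL.1) = (g ∈ P.1) := propext (hagree g hg)
    rw [heq]
    exact (hu g hg).2
  have hQt : (fun g => g ∈ QL.1) ∈ t := hsub hQmem
  have : QL ∈ ({P} : Set (LO (FreeGroup (Fin n)))) := by
    rw [← htP]
    exact hQt
  have hQLP : QL = P := this
  exact hQP (congrArg Subtype.val hQLP)
end

section
/- Let B_n, n > 2, be the braid group on n strands. Then LO(B_n) contains no dense orbit: for every positive cone P on B_n, the closure of Orb_{B_n}(P) is a proper subset of LO(B_n). -/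
/-- The braid relations on n strands, on generators σ_1, ..., σ_{n-1} indexed by
Fin (n-1): σ_i σ_{i+1} σ_i = σ_{i+1} σ_i σ_{i+1} and σ_i σ_j = σ_j σ_i for |i-j| ≥ 2. -/
def braidRels (n : ℕ) : Set (FreeGroup (Fin (n - 1))) :=
  {r | ∃ i j : Fin (n - 1), (j : ℕ) = (i : ℕ) + 1 ∧
      r = FreeGroup.of i * FreeGroup.of j * FreeGroup.of i *
          (FreeGroup.of j * FreeGroup.of i * FreeGroup.of j)⁻¹}
  ∪ {r | ∃ i j : Fin (n - 1), (i : ℕ) + 2 ≤ (j : ℕ) ∧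
      r = FreeGroup.of i * FreeGroup.of j * (FreeGroup.of i)⁻¹ * (FreeGroup.of j)⁻¹}

/-- The braid group on n strands, as a presented group. -/
abbrev BraidGroup (n : ℕ) : Type := PresentedGroup (braidRels n)


namespace BraidAux

variable {n : ℕ}

/-- generator, extended by 1 outside range -/
def s (n : ℕ) (i : ℕ) : BraidGroup n :=
  if h : i < n - 1 then PresentedGroup.of ⟨i, h⟩ else 1

lemma rel_eq_one {r : FreeGroup (Fin (n - 1))} (h : r ∈ braidRels n) :
    PresentedGroup.mk (braidRels n) r = 1 := by
  have : r ∈ Subgroup.normalClosure (braidRels n) := Subgroup.subset_normalClosure h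
  exact (QuotientGroup.eq_one_iff r).mpr this

lemma braid1 {i : ℕ} (h : i + 1 < n - 1) :
    s n i * s n (i + 1) * s n i = s n (i + 1) * s n i * s n (i + 1) := by
  have hi : i < n - 1 := Nat.lt_of_succ_lt h
  have hr : (FreeGroup.of (⟨i, hi⟩ : Fin (n-1)) * FreeGroup.of (⟨i+1, h⟩ : Fin (n-1)) *
      FreeGroup.of ⟨i, hi⟩ *
      (FreeGroup.of (⟨i+1, h⟩ : Fin (n-1)) * FreeGroup.of ⟨i, hi⟩ * FreeGroup.of ⟨i+1, h⟩)⁻¹)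
      ∈ braidRels n := Or.inl ⟨⟨i, hi⟩, ⟨i+1, h⟩, rfl, rfl⟩
  have h1 := rel_eq_one hr
  rw [map_mul, map_mul, map_inv, map_mul, map_mul, mul_inv_eq_one] at h1
  simp only [s, dif_pos hi, dif_pos h]
  exact h1

lemma braid2 {i j : ℕ} (h : i + 2 ≤ j) : Commute (s n i) (s n j) := by
  by_cases hj : j < n - 1
  · have hi : i < n - 1 := by omega
    have hr : (FreeGroup.of (⟨i, hi⟩ : Fin (n-1)) * FreeGroup.of (⟨j, hj⟩ : Fin (n-1)) *
        (FreeGroup.of (⟨i, hi⟩ : Fin (n-1)))⁻¹ * (FreeGroup.of (⟨j, hj⟩ : Fin (n-1)))⁻¹)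
        ∈ braidRels n := Or.inr ⟨⟨i, hi⟩, ⟨j, hj⟩, h, rfl⟩
    have h1 := rel_eq_one hr
    rw [map_mul, map_mul, map_inv, map_inv] at h1
    have h2 := mul_inv_eq_one.mp h1
    have h3 := mul_inv_eq_iff_eq_mul.mp h2
    simp only [s, dif_pos hi, dif_pos hj]
    rw [map_mul] at h3
    exact h3
  · simp [s, dif_neg hj, Commute.one_right]


def pp (n : ℕ) : ℕ → BraidGroup n
  | 0 => 1
  | k + 1 => pp n k * s n k

def rr (n : ℕ) : ℕ → ℕ → BraidGroup n
  | _, 0 => 1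
  | a, b + 1 => s n a * rr n (a + 1) b

lemma pp_zero : pp n 0 = 1 := rfl
lemma pp_succ (k : ℕ) : pp n (k + 1) = pp n k * s n k := rfl
lemma rr_zero (a : ℕ) : rr n a 0 = 1 := rfl
lemma rr_succ (a b : ℕ) : rr n a (b + 1) = s n a * rr n (a + 1) b := rfl

lemma rr_succ_right (a b : ℕ) : rr n a (b + 1) = rr n a b * s n (a + b) := by
  induction b generalizing a with
  | zero => simp [rr_succ, rr_zero]
  | succ b ih =>
    rw [rr_succ, ih (a + 1), rr_succ, ← mul_assoc, show a + 1 + b = a + (b + 1) by omega]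

lemma pp_add (a b : ℕ) : pp n a * rr n a b = pp n (a + b) := by
  induction b generalizing a with
  | zero => simp [rr_zero]
  | succ b ih =>
    rw [rr_succ, ← mul_assoc, ← pp_succ, ih (a + 1)]
    congr 1
    omega

lemma comm_rr {i : ℕ} (b : ℕ) : ∀ a, i + 2 ≤ a → Commute (s n i) (rr n a b) := by
  induction b with
  | zero => exact fun a _ => Commute.one_right _
  | succ b ih => exact fun a h => (braid2 h).mul_right (ih (a + 1) (by omega))

lemma comm_pp {t k : ℕ} (h : k ≤ t - 1) (ht : 1 ≤ t) : Commute (s n t) (pp n k) := by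
  induction k with
  | zero => exact Commute.one_right _
  | succ k ih =>
    exact (ih (by omega)).mul_right ((braid2 (by omega)).symm)

def dd (n : ℕ) : BraidGroup n := pp n (n - 1)

section generic
variable {G : Type*} [Group G]

lemma grp_lemA {p R si sj D : G} (hD : D = p * si * sj * R)
    (hc1 : si * R = R * si) (hb : si * sj * si = sj * si * sj)
    (hc2 : sj * p = p * sj) : D * si = sj * D := by
  subst hD
  calc p * si * sj * R * si = (p * si * sj) * (si * R) := by
        rw [hc1]; group
    _ = p * (si * sj * si) * R := by group
    _ = (p * sj) * (si * sj) * R := by rw [hb]; group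
    _ = (sj * p) * (si * sj) * R := by rw [hc2]
    _ = sj * (p * si * sj * R) := by group

lemma grp_lemW {r p sk sk1 s0 : G} (hc : sk1 * p = p * sk1)
    (hb : sk * sk1 * sk = sk1 * sk * sk1) (ih : r * p * sk = s0 * (r * p)) :
    (r * sk1) * (p * sk) * sk1 = s0 * ((r * sk1) * (p * sk)) := by
  calc (r * sk1) * (p * sk) * sk1 = r * (sk1 * p) * (sk * sk1) := by group
    _ = r * (p * sk1) * (sk * sk1) := by rw [hc]
    _ = (r * p) * (sk1 * sk * sk1) := by group
    _ = (r * p * sk) * (sk1 * sk) := by rw [← hb]; group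
    _ = (s0 * (r * p)) * (sk1 * sk) := by rw [ih]
    _ = s0 * (r * (p * sk1) * sk) := by group
    _ = s0 * (r * (sk1 * p) * sk) := by rw [← hc]
    _ = s0 * ((r * sk1) * (p * sk)) := by group

lemma grp_lemG {a b r c d : G} (hd : d = a * b) (hE : d * a = r * d)
    (hW : r * a * b = c * (r * a)) : d * d * b = c * (d * d) := by
  have hE' : ∀ x : G, d * (a * x) = r * (d * x) := fun x => by
    rw [← mul_assoc, hE, mul_assoc]
  have hW' : ∀ x : G, r * (a * (b * x)) = c * (r * (a * x)) := fun x => by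
    calc r * (a * (b * x)) = (r * a * b) * x := by group
      _ = (c * (r * a)) * x := by rw [hW]
      _ = c * (r * (a * x)) := by group
  have hW2 : r * (a * b) = c * (r * a) := by rw [← mul_assoc, hW]
  have h1 : d * d * b = c * (c * (c * (r * a))) := by
    calc d * d * b = d * (a * (b * b)) := by rw [hd]; group
      _ = r * (d * (b * b)) := hE' _
      _ = r * (a * (b * (b * b))) := by rw [hd]; group
      _ = c * (r * (a * (b * b))) := hW' _
      _ = c * (c * (r * (a * b))) := by rw [hW' b]
      _ = c * (c * (c * (r * a))) := by rw [hW2]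
  have h2 : c * (d * d) = c * (c * (c * (r * a))) := by
    calc c * (d * d) = c * (d * (a * b)) := by rw [hd]
      _ = c * (r * (d * b)) := by rw [hE' b]
      _ = c * (r * (a * (b * b))) := by rw [hd]; group
      _ = c * (c * (r * (a * b))) := by rw [hW' b]
      _ = c * (c * (c * (r * a))) := by rw [hW2]
  rw [h1, h2]

end generic

lemma lemA {i : ℕ} (h : i + 1 < n - 1) : dd n * s n i = s n (i + 1) * dd n := by
  have hD : dd n = pp n i * s n i * s n (i + 1) * rr n (i + 2) (n - 1 - (i + 2)) := by
    rw [show pp n i * s n i * s n (i+1) = pp n (i + 2) from rfl, pp_add, dd]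
    congr 1
    omega
  exact grp_lemA hD (comm_rr _ _ (le_refl (i + 2))).eq (braid1 h)
    ((comm_pp (t := i + 1) (k := i) (by omega) (by omega)).eq)

lemma lemE {k : ℕ} (h : k < n - 1) : dd n * pp n k = rr n 1 k * dd n := by
  induction k with
  | zero => simp [pp_zero, rr_zero]
  | succ k ih =>
    calc dd n * pp n (k + 1) = (dd n * pp n k) * s n k := by rw [pp_succ, mul_assoc]
      _ = rr n 1 k * (dd n * s n k) := by rw [ih (by omega), mul_assoc]
      _ = rr n 1 k * s n (k + 1) * dd n := by rw [lemA h, mul_assoc]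
      _ = rr n 1 (k + 1) * dd n := by rw [rr_succ_right, show 1 + k = k + 1 by omega]

lemma lemW {k : ℕ} (h : k < n - 1) :
    rr n 1 k * pp n k * s n k = s n 0 * (rr n 1 k * pp n k) := by
  induction k with
  | zero => simp [pp_zero, rr_zero]
  | succ k ih =>
    have hr : rr n 1 (k + 1) = rr n 1 k * s n (k + 1) := by
      rw [rr_succ_right, show 1 + k = k + 1 by omega]
    rw [hr, pp_succ]
    exact grp_lemW ((comm_pp (t := k + 1) (k := k) (by omega) (by omega)).eq)
      (braid1 h) (ih (by omega))

lemma lemG1 (hn : 2 ≤ n) : dd n * dd n * s n (n - 2) = s n 0 * (dd n * dd n) := by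
  have hd : dd n = pp n (n - 2) * s n (n - 2) := by
    rw [← pp_succ, dd]
    congr 1
    omega
  exact grp_lemG hd (lemE (by omega)) (lemW (by omega))

lemma lemF {k i : ℕ} (h : i + k < n - 1) : dd n ^ k * s n i = s n (i + k) * dd n ^ k := by
  induction k generalizing i with
  | zero => simp
  | succ k ih =>
    calc dd n ^ (k + 1) * s n i = dd n ^ k * (dd n * s n i) := by rw [pow_succ, mul_assoc]
      _ = dd n ^ k * s n (i + 1) * dd n := by rw [lemA (by omega), mul_assoc]
      _ = s n (i + 1 + k) * dd n ^ k * dd n := by rw [ih (by omega)]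
      _ = s n (i + (k + 1)) * dd n ^ (k + 1) := by
          rw [show i + 1 + k = i + (k + 1) by omega, pow_succ, mul_assoc]

lemma central_gen (hn : 2 ≤ n) {i : ℕ} (hi : i < n - 1) :
    dd n ^ n * s n i = s n i * dd n ^ n := by
  have hpow : dd n ^ n = dd n ^ i * dd n * dd n * dd n ^ (n - 2 - i) := by
    calc dd n ^ n = dd n ^ (i + 1 + 1 + (n - 2 - i)) := by
          rw [show i + 1 + 1 + (n - 2 - i) = n by omega]
      _ = dd n ^ i * dd n * dd n * dd n ^ (n - 2 - i) := by
          rw [pow_add, pow_succ, pow_succ]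
  have h1 : dd n ^ (n - 2 - i) * s n i = s n (n - 2) * dd n ^ (n - 2 - i) := by
    have := lemF (n := n) (k := n - 2 - i) (i := i) (by omega)
    rwa [show i + (n - 2 - i) = n - 2 by omega] at this
  have h2 : dd n ^ i * s n 0 = s n i * dd n ^ i := by
    have := lemF (n := n) (k := i) (i := 0) (by omega)
    rwa [show 0 + i = i by omega] at this
  calc dd n ^ n * s n i
      = dd n ^ i * dd n * dd n * (dd n ^ (n - 2 - i) * s n i) := by rw [hpow]; group
    _ = dd n ^ i * dd n * dd n * (s n (n - 2) * dd n ^ (n - 2 - i)) := by rw [h1]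
    _ = dd n ^ i * (dd n * dd n * s n (n - 2)) * dd n ^ (n - 2 - i) := by group
    _ = dd n ^ i * (s n 0 * (dd n * dd n)) * dd n ^ (n - 2 - i) := by rw [lemG1 hn]
    _ = (dd n ^ i * s n 0) * (dd n * dd n) * dd n ^ (n - 2 - i) := by group
    _ = (s n i * dd n ^ i) * (dd n * dd n) * dd n ^ (n - 2 - i) := by rw [h2]
    _ = s n i * dd n ^ n := by rw [hpow]; group

lemma central (hn : 2 ≤ n) (g : BraidGroup n) : dd n ^ n * g = g * dd n ^ n := by
  have hmem : g ∈ Subgroup.centralizer {dd n ^ n} := by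
    apply PresentedGroup.generated_by
    intro j
    rw [Subgroup.mem_centralizer_iff]
    rintro m rfl
    have hj := central_gen (n := n) hn (i := (j : ℕ)) j.isLt
    simp only [s, dif_pos j.isLt] at hj
    simpa using hj
  exact Subgroup.mem_centralizer_iff.mp hmem _ rfl


lemma braid_rels_exp :
    ∀ r ∈ braidRels n, FreeGroup.lift (fun _ : Fin (n - 1) => Multiplicative.ofAdd (1 : ℤ)) r = 1 := by
  intro r hr
  rcases hr with ⟨i, j, -, rfl⟩ | ⟨i, j, -, rfl⟩ <;>
    simp only [map_mul, map_inv, FreeGroup.lift_apply_of] <;> group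

def expSum (n : ℕ) : BraidGroup n →* Multiplicative ℤ :=
  PresentedGroup.toGroup braid_rels_exp

lemma expSum_s {i : ℕ} (h : i < n - 1) :
    expSum n (s n i) = Multiplicative.ofAdd (1 : ℤ) := by
  rw [s, dif_pos h]
  exact PresentedGroup.toGroup.of _

lemma expSum_pp {k : ℕ} (hk : k ≤ n - 1) :
    expSum n (pp n k) = Multiplicative.ofAdd (k : ℤ) := by
  induction k with
  | zero => simp [pp_zero]
  | succ k ih =>
    rw [pp_succ, map_mul, ih (by omega), expSum_s (by omega), ← ofAdd_add]
    norm_cast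

lemma dd_pow_ne_one (hn : 2 < n) : dd n ^ n ≠ 1 := by
  intro h
  have h1 := congrArg (expSum n) h
  rw [map_pow, map_one, dd, expSum_pp (le_refl _), ← ofAdd_nsmul, ofAdd_eq_one,
    nsmul_eq_mul] at h1
  have hn1 : ((n - 1 : ℕ) : ℤ) ≠ 0 := by
    simp only [ne_eq, Nat.cast_eq_zero]
    omega
  have hn2 : (n : ℤ) ≠ 0 := by
    simp only [ne_eq, Nat.cast_eq_zero]
    omega
  exact mul_ne_zero hn2 hn1 h1

end BraidAux

lemma isOpen_eval {G : Type*} [Group G] (g : G) (c : Prop) :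
    IsOpen {R : LO G | (g ∈ R.1) = c} := by
  letI : TopologicalSpace Prop := ⊥
  haveI : DiscreteTopology Prop := ⟨rfl⟩
  have h1 : Continuous (fun h : G → Prop => h g) := continuous_apply g
  have h2 : IsOpen ((fun h : G → Prop => h g) ⁻¹' {c}) :=
    h1.isOpen_preimage _ (isOpen_discrete _)
  have he : {R : LO G | (g ∈ R.1) = c} =
      (fun (P : LO G) (x : G) => x ∈ P.1) ⁻¹'
        ((fun h : G → Prop => h g) ⁻¹' {c}) := rfl
  rw [he]
  exact isOpen_induced h2



theorem braid_group_no_dense_orbit (n : ℕ) (hn : 2 < n) :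
    ∀ P : LO (BraidGroup n), closure (orb P) ⊂ Set.univ := by
  intro P
  rw [Set.ssubset_univ_iff]
  intro hcl
  set z : BraidGroup n := BraidAux.dd n ^ n with hzdef
  have hz1 : z ≠ 1 := BraidAux.dd_pow_ne_one hn
  have hzc : ∀ g : BraidGroup n, z * g = g * z := BraidAux.central (by omega)
  obtain ⟨hmul, hone, htri⟩ := P.2
  have hQcone : IsPositiveCone {x : BraidGroup n | x⁻¹ ∈ P.1} := by
    refine ⟨?_, ?_, ?_⟩
    · intro a ha b hb
      show (a * b)⁻¹ ∈ P.1
      rw [mul_inv_rev]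
      exact hmul _ hb _ ha
    · simpa using hone
    · intro g hg
      have h := htri g hg
      simp only [Set.mem_setOf_eq, inv_inv]
      constructor
      · intro h1 h2
        exact (h.mp h2) h1
      · intro h1
        by_contra h2
        exact h1 (h.mpr h2)
  set Q : LO (BraidGroup n) := ⟨_, hQcone⟩ with hQdef
  have hQmem : Q ∈ closure (orb P) := by rw [hcl]; trivial
  rw [mem_closure_iff] at hQmem
  obtain ⟨R, hRV, hRorb⟩ := hQmem _ (isOpen_eval z (z ∈ Q.1)) rfl
  obtain ⟨g, hg⟩ := hRorb
  have hzR : z ∈ R.1 ↔ z ∈ P.1 := by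
    rw [hg]
    constructor
    · rintro ⟨x, hx, hxe⟩
      have hx2 : x = z := by
        have h3 : g * x * g⁻¹ = z := hxe
        have : g * x = z * g := by
          rw [← h3]; group
        have : g * x = g * z := by rw [this, hzc g]
        exact mul_left_cancel this
      rwa [← hx2]
    · intro hzP
      refine ⟨z, hzP, ?_⟩
      show g * z * g⁻¹ = z
      rw [← hzc g]
      group
  have hzQ : z ∈ Q.1 ↔ z ∉ P.1 := by
    show z⁻¹ ∈ P.1 ↔ z ∉ P.1
    have h := htri z hz1
    constructor
    · intro h1 h2
      exact (h.mp h2) h1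
    · intro h1
      by_contra h2
      exact h1 (h.mpr h2)
  by_cases hp : z ∈ P.1
  · have h1 : z ∈ R.1 := hzR.mpr hp
    have h2 : z ∈ Q.1 := hRV ▸ h1
    exact (hzQ.mp h2) hp
  · have h1 : z ∈ Q.1 := hzQ.mpr hp
    have h2 : z ∈ R.1 := hRV.symm ▸ h1
    exact hp (hzR.mp h2)
end
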